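/- arXiv:1305.0919 — 5 statements merged into one kernel-verified Lean document; each statement's English description precedes it below -/
import Mathlib

section
/- Let k₀ > 0, let a ∈ ℝ³ with a₃ = 0 and β ∈ ℂ satisfy a·a + β² = k₀², and set d = a − β e₃ ∈ ℂ³. Let p, Ẽ ∈ ℂ³ with d·Ẽ = 0, and set p_m = p − ((d·p)/k₀²) d. Then ((Ẽ × e₃) × d − e₃ × ((−d) × Ẽ)) · p_m = 2β (Ẽ·p). (This is the final vector-algebra identity in the proof of the mixed reciprocity relation.) -/
noncomputable section

open MeasureTheory Real Set

/-- Points of `ℝ³`. -/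
abbrev V3 := Fin 3 → ℝ
/-- Vectors of `ℂ³`. -/
abbrev C3 := Fin 3 → ℂ

/-- The bilinear (unconjugated) dot product on `ℂ³`. -/
def cdot (a b : C3) : ℂ := a 0 * b 0 + a 1 * b 1 + a 2 * b 2

/-- The Euclidean dot product on `ℝ³`. -/
def rdot (a x : V3) : ℝ := a 0 * x 0 + a 1 * x 1 + a 2 * x 2

/-- The cross product, extended bilinearly to `ℂ³`. -/
def cross (a b : C3) : C3 :=
  ![a 1 * b 2 - a 2 * b 1, a 2 * b 0 - a 0 * b 2, a 0 * b 1 - a 1 * b 0]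

/-- Inclusion `ℝ³ ⊆ ℂ³`. -/
def toC3 (v : V3) : C3 := fun i => (v i : ℂ)

/-- Standard basis of `ℝ³`. -/
def stdR (j : Fin 3) : V3 := fun k => if k = j then 1 else 0

/-- Standard basis of `ℂ³`. -/
def stdC (j : Fin 3) : C3 := fun k => if k = j then 1 else 0

/-- The Euclidean norm on `ℝ³`. -/
def enorm3 (v : V3) : ℝ := Real.sqrt (rdot v v)

/-- The squared Hermitian norm on `ℂ³`. -/
def hnormSq (a : C3) : ℝ := Complex.normSq (a 0) + Complex.normSq (a 1) + Complex.normSq (a 2)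

/-- Partial derivative `∂_j F` of a scalar field. -/
def pd (j : Fin 3) (F : V3 → ℂ) (x : V3) : ℂ := fderiv ℝ F x (stdR j)

/-- curl of a `ℂ³`-valued field on `ℝ³`. -/
def curl3 (E : V3 → C3) (x : V3) : C3 :=
  ![pd 1 (fun y => E y 2) x - pd 2 (fun y => E y 1) x,
    pd 2 (fun y => E y 0) x - pd 0 (fun y => E y 2) x,
    pd 0 (fun y => E y 1) x - pd 1 (fun y => E y 0) x]

/-- divergence of a `ℂ³`-valued field on `ℝ³`. -/
def div3 (E : V3 → C3) (x : V3) : ℂ :=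
  pd 0 (fun y => E y 0) x + pd 1 (fun y => E y 1) x + pd 2 (fun y => E y 2) x

/-- Laplacian of a scalar field on `ℝ³`. -/
def lap3 (F : V3 → ℂ) (x : V3) : ℂ :=
  pd 0 (pd 0 F) x + pd 1 (pd 1 F) x + pd 2 (pd 2 F) x

/-- `α_n = (α₁+n₁, α₂+n₂, 0)`. -/
def alphaN (α : ℝ × ℝ) (n : ℤ × ℤ) : V3 := ![α.1 + n.1, α.2 + n.2, 0]

/-- `β_n = (k₀²-|α_n|²)^{1/2}` if `|α_n|² ≤ k₀²`, and `i(|α_n|²-k₀²)^{1/2}` otherwise. -/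
def betaN (k₀ : ℝ) (α : ℝ × ℝ) (n : ℤ × ℤ) : ℂ :=
  if (α.1 + n.1) ^ 2 + (α.2 + n.2) ^ 2 ≤ k₀ ^ 2 then
    ((Real.sqrt (k₀ ^ 2 - ((α.1 + n.1) ^ 2 + (α.2 + n.2) ^ 2)) : ℝ) : ℂ)
  else Complex.I * ((Real.sqrt ((α.1 + n.1) ^ 2 + (α.2 + n.2) ^ 2 - k₀ ^ 2) : ℝ) : ℂ)

/-- `E` is α-quasi-periodic on the set `D`. -/
def QPOn (α : ℝ × ℝ) (D : Set V3) (E : V3 → C3) : Prop :=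
  ∀ x ∈ D,
    E (x + (2 * π) • stdR 0) = Complex.exp (2 * π * α.1 * Complex.I) • E x ∧
    E (x + (2 * π) • stdR 1) = Complex.exp (2 * π * α.2 * Complex.I) • E x

/-- A function on `ℝ²` is `2π`-periodic in each variable. -/
def Per2 (g : ℝ × ℝ → ℝ) : Prop :=
  ∀ x' : ℝ × ℝ, g (x'.1 + 2 * π, x'.2) = g x' ∧ g (x'.1, x'.2 + 2 * π) = g x'

/-- A subset of `ℝ²` is `2π`-biperiodic. -/
def PerSet (S : Set (ℝ × ℝ)) : Prop :=
  ∀ x' : ℝ × ℝ, (x' ∈ S ↔ (x'.1 + 2 * π, x'.2) ∈ S) ∧ (x' ∈ S ↔ (x'.1, x'.2 + 2 * π) ∈ S)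

/-- Partial derivatives of a function on `ℝ²`. -/
def pdR (j : Fin 2) (φ : ℝ × ℝ → ℝ) (x' : ℝ × ℝ) : ℝ :=
  fderiv ℝ φ x' (if j = 0 then (1, 0) else (0, 1))

/-- Area element `√(1+|∇φ|²)` of the graph of `φ`. -/
def areaEl (φ : ℝ × ℝ → ℝ) (x' : ℝ × ℝ) : ℝ :=
  Real.sqrt (1 + (pdR 0 φ x') ^ 2 + (pdR 1 φ x') ^ 2)

/-- Upward unit normal of the graph of `φ`. -/
def nvec (φ : ℝ × ℝ → ℝ) (x' : ℝ × ℝ) : V3 :=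
  (areaEl φ x')⁻¹ • ![-(pdR 0 φ x'), -(pdR 1 φ x'), 1]

/-- The point `(x₁, x₂, φ(x₁,x₂))` on the graph of `φ`. -/
def graphPt (φ : ℝ × ℝ → ℝ) (x' : ℝ × ℝ) : V3 := ![x'.1, x'.2, φ x']

/-- The point `(x₁, x₂, h)`. -/
def pt3 (x' : ℝ × ℝ) (h : ℝ) : V3 := ![x'.1, x'.2, h]

/-- One period cell `(0,2π)²` of `ℝ²`. -/
def cellSq : Set (ℝ × ℝ) := Set.Ioo 0 (2 * π) ×ˢ Set.Ioo 0 (2 * π)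

/-- The outgoing Rayleigh series with coefficients `En`. -/
def rayleighSeries (k₀ : ℝ) (α : ℝ × ℝ) (En : ℤ × ℤ → C3) : V3 → C3 := fun x =>
  ∑' n : ℤ × ℤ,
    Complex.exp (Complex.I * ((rdot (alphaN α n) x : ℝ) + betaN k₀ α n * (x 2 : ℝ))) • En n

/-- The complex direction vector `d = α_m - β_m e₃` of the incident plane wave. -/
def dVec (k₀ : ℝ) (α : ℝ × ℝ) (m : ℤ × ℤ) : C3 :=
  toC3 (alphaN α m) - betaN k₀ α m • stdC 2

/-- `d · x` for `d ∈ ℂ³`, `x ∈ ℝ³`. -/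
def cdotR (d : C3) (x : V3) : ℂ := d 0 * x 0 + d 1 * x 1 + d 2 * x 2

/-- `p_m = p - ((d·p)/k₀²) d`. -/
def pmVec (k₀ : ℝ) (α : ℝ × ℝ) (m : ℤ × ℤ) (p : C3) : C3 :=
  p - (cdot (dVec k₀ α m) p / (k₀ ^ 2 : ℂ)) • dVec k₀ α m

/-- The incident wave `E^i(x) = (1/k₀²) curl curl [p e^{i d·x}]`. -/
def planeInc (k₀ : ℝ) (α : ℝ × ℝ) (m : ℤ × ℤ) (p : C3) : V3 → C3 := fun x =>
  ((k₀ ^ 2 : ℂ))⁻¹ •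
    curl3 (curl3 fun y => Complex.exp (Complex.I * cdotR (dVec k₀ α m) y) • p) x

/-- the final vector-algebra identity in the proof of the mixed
reciprocity relation: if `a₃ = 0`, `a·a + β² = k₀²`, `d = a - β e₃` and `d·Ẽ = 0`, then
`((Ẽ × e₃) × d - e₃ × ((-d) × Ẽ)) · p_m = 2β (Ẽ·p)` where `p_m = p - ((d·p)/k₀²) d`. -/
theorem statement5 (k₀ : ℝ) (hk₀ : 0 < k₀) (a : V3) (ha : a 2 = 0) (β : ℂ)
    (hdisp : ((rdot a a : ℝ) : ℂ) + β ^ 2 = (k₀ ^ 2 : ℂ))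
    (p Et : C3) (d : C3) (hd : d = toC3 a - β • stdC 2)
    (hEt : cdot d Et = 0) :
    cdot (cross (cross Et (stdC 2)) d - cross (stdC 2) (cross (-d) Et))
        (p - (cdot d p / (k₀ ^ 2 : ℂ)) • d)
      = 2 * β * cdot Et p := by
  subst hd
  have hk : ((k₀ : ℂ)) ^ 2 ≠ 0 := by
    exact pow_ne_zero 2 (by exact_mod_cast hk₀.ne')
  simp only [cdot, cross, toC3, stdC, rdot, Pi.sub_apply, Pi.smul_apply, smul_eq_mul,
    Matrix.cons_val_zero, Matrix.cons_val_one, Matrix.head_cons, Matrix.cons_val_two,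
    Matrix.tail_cons, Pi.neg_apply, ha] at hEt hdisp ⊢
  push_cast [ha] at hEt hdisp ⊢
  field_simp [show (k₀ : ℂ) ≠ 0 by exact_mod_cast hk₀.ne']
  linear_combination (p 2 * (k₀ : ℂ) ^ 2 - β * ((a 0 : ℂ) * p 0 + (a 1 : ℂ) * p 1 - β * p 2)) * hEt
    - (Et 2 * ((a 0 : ℂ) * p 0 + (a 1 : ℂ) * p 1 - β * p 2)) * hdisp
end
end

section
/- Let (E_n)_{n∈ℤ²}, (Ẽ_n)_{n∈ℤ²} ⊆ ℂ³ satisfy the divergence-free coefficient conditions α_n·E_n + β_n (E_n)₃ = 0 and α̃_n·Ẽ_n + β̃_n (Ẽ_n)₃ = 0 for all n, and suppose for some h₀ < h that Σ_n (1+|α_n|)|E_n| e^{−Im(β_n) h₀} < ∞ and Σ_n (1+|α̃_n|)|Ẽ_n| e^{−Im(β̃_n) h₀} < ∞. Define the outgoing Rayleigh series E^s(x) = Σ_n E_n e^{i(α_n·x + β_n x₃)} and W̃(x) = Σ_n Ẽ_n e^{i(α̃_n·x + β̃_n x₃)} for x₃ > h₀ (both series and their termwise first derivatives converge absolutely and locally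 uniformly, so curls are computed termwise). Then ∫_{(0,2π)²} [ (e₃ × curl E^s) · W̃ − (e₃ × curl W̃) · E^s ](x₁,x₂,h) dx₁ dx₂ = 0. -/
noncomputable section

open MeasureTheory Real Set

section Aux

open Complex

/-- complex direction vector of mode `n`: `(α₁+n₁, α₂+n₂, β_n)`. -/
def dCv (k₀ : ℝ) (α : ℝ × ℝ) (n : ℤ × ℤ) : C3 :=
  fun j => ((alphaN α n j : ℝ) : ℂ) + (if j = 2 then betaN k₀ α n else 0)

/-- single Rayleigh mode. -/
def modeF (k₀ : ℝ) (α : ℝ × ℝ) (n : ℤ × ℤ) (x : V3) : ℂ :=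
  Complex.exp (Complex.I * ((rdot (alphaN α n) x : ℝ) + betaN k₀ α n * (x 2 : ℝ)))

lemma alphaN_two (α : ℝ × ℝ) (n : ℤ × ℤ) : alphaN α n 2 = 0 := rfl

lemma betaN_im_nonneg (k₀ : ℝ) (α : ℝ × ℝ) (n : ℤ × ℤ) : 0 ≤ (betaN k₀ α n).im := by
  unfold betaN
  split
  · simp
  · simp [Real.sqrt_nonneg]

lemma enorm3_alphaN (α : ℝ × ℝ) (n : ℤ × ℤ) :
    enorm3 (alphaN α n) = Real.sqrt ((α.1 + n.1) ^ 2 + (α.2 + n.2) ^ 2) := by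
  simp [enorm3, rdot, alphaN]
  ring_nf

lemma enorm3_nonneg (v : V3) : 0 ≤ enorm3 v := Real.sqrt_nonneg _

lemma norm_betaN_le (k₀ : ℝ) (hk : 0 ≤ k₀) (α : ℝ × ℝ) (n : ℤ × ℤ) :
    ‖betaN k₀ α n‖ ≤ k₀ + enorm3 (alphaN α n) := by
  rw [enorm3_alphaN]
  unfold betaN
  split
  · rw [Complex.norm_real, Real.norm_of_nonneg (Real.sqrt_nonneg _)]
    calc Real.sqrt (k₀ ^ 2 - ((α.1 + ↑n.1) ^ 2 + (α.2 + ↑n.2) ^ 2)) ≤ Real.sqrt (k₀ ^ 2) := by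
          apply Real.sqrt_le_sqrt; nlinarith [sq_nonneg (α.1 + (n.1:ℝ)), sq_nonneg (α.2 + (n.2:ℝ))]
      _ = k₀ := by rw [Real.sqrt_sq hk]
      _ ≤ _ := by linarith [Real.sqrt_nonneg ((α.1 + (n.1:ℝ)) ^ 2 + (α.2 + (n.2:ℝ)) ^ 2)]
  · rw [norm_mul, Complex.norm_I, one_mul, Complex.norm_real,
      Real.norm_of_nonneg (Real.sqrt_nonneg _)]
    calc Real.sqrt ((α.1 + ↑n.1) ^ 2 + (α.2 + ↑n.2) ^ 2 - k₀ ^ 2)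
        ≤ Real.sqrt ((α.1 + ↑n.1) ^ 2 + (α.2 + ↑n.2) ^ 2) := by
          apply Real.sqrt_le_sqrt; nlinarith [sq_nonneg k₀]
      _ ≤ _ := by linarith [Real.sqrt_nonneg ((α.1 + (n.1:ℝ)) ^ 2 + (α.2 + (n.2:ℝ)) ^ 2)]

lemma abs_alphaN_le (α : ℝ × ℝ) (n : ℤ × ℤ) (j : Fin 3) :
    |alphaN α n j| ≤ enorm3 (alphaN α n) := by
  rw [enorm3_alphaN]
  fin_cases j
  · show |(α.1 + n.1 : ℝ)| ≤ _
    rw [← Real.sqrt_sq_eq_abs]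
    apply Real.sqrt_le_sqrt; nlinarith [sq_nonneg (α.2 + (n.2:ℝ))]
  · show |(α.2 + n.2 : ℝ)| ≤ _
    rw [← Real.sqrt_sq_eq_abs]
    apply Real.sqrt_le_sqrt; nlinarith [sq_nonneg (α.1 + (n.1:ℝ))]
  · show |(0 : ℝ)| ≤ _
    simp [Real.sqrt_nonneg]

lemma norm_modeF (k₀ : ℝ) (α : ℝ × ℝ) (n : ℤ × ℤ) (x : V3) :
    ‖modeF k₀ α n x‖ = Real.exp (-(betaN k₀ α n).im * x 2) := by
  rw [modeF, Complex.norm_exp]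
  congr 1
  simp [Complex.mul_re, Complex.add_im, Complex.mul_im]

lemma norm_modeF_le (k₀ : ℝ) (α : ℝ × ℝ) (n : ℤ × ℤ) {x : V3} {h₀ : ℝ} (hx : h₀ ≤ x 2) :
    ‖modeF k₀ α n x‖ ≤ Real.exp (-(betaN k₀ α n).im * h₀) := by
  rw [norm_modeF]
  apply Real.exp_le_exp.2
  have := betaN_im_nonneg k₀ α n
  nlinarith

end Aux
section Aux2

/-- the continuous ℝ-linear map `v ↦ d₀v₀+d₁v₁+d₂v₂` on `V3`, valued in `ℂ`. -/
def linD (d : C3) : V3 →L[ℝ] ℂ :=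
  d 0 • (Complex.ofRealCLM.comp (ContinuousLinearMap.proj (R := ℝ) (φ := fun _ : Fin 3 => ℝ) 0)) +
  d 1 • (Complex.ofRealCLM.comp (ContinuousLinearMap.proj (R := ℝ) (φ := fun _ : Fin 3 => ℝ) 1)) +
  d 2 • (Complex.ofRealCLM.comp (ContinuousLinearMap.proj (R := ℝ) (φ := fun _ : Fin 3 => ℝ) 2))

lemma linD_apply (d : C3) (v : V3) :
    linD d v = d 0 * v 0 + d 1 * v 1 + d 2 * v 2 := by
  simp [linD]

lemma norm_linD_le (d : C3) : ‖linD d‖ ≤ ‖d 0‖ + ‖d 1‖ + ‖d 2‖ := by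
  apply ContinuousLinearMap.opNorm_le_bound
  · positivity
  intro v
  rw [linD_apply]
  have hv : ∀ j : Fin 3, ‖(v j : ℂ)‖ ≤ ‖v‖ := by
    intro j
    rw [Complex.norm_real]
    exact norm_le_pi_norm v j
  calc ‖d 0 * v 0 + d 1 * v 1 + d 2 * v 2‖
      ≤ ‖d 0 * v 0 + d 1 * v 1‖ + ‖d 2 * v 2‖ := norm_add_le _ _
    _ ≤ ‖d 0 * v 0‖ + ‖d 1 * v 1‖ + ‖d 2 * v 2‖ := by
        gcongr; exact norm_add_le _ _
    _ = ‖d 0‖ * ‖(v 0 : ℂ)‖ + ‖d 1‖ * ‖(v 1 : ℂ)‖ + ‖d 2‖ * ‖(v 2 : ℂ)‖ := by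
        simp [norm_mul]
    _ ≤ ‖d 0‖ * ‖v‖ + ‖d 1‖ * ‖v‖ + ‖d 2‖ * ‖v‖ := by
        gcongr <;> [exact hv 0; exact hv 1; exact hv 2]
    _ = (‖d 0‖ + ‖d 1‖ + ‖d 2‖) * ‖v‖ := by ring

lemma linD_stdR (d : C3) (j : Fin 3) : linD d (stdR j) = d j := by
  fin_cases j <;> simp [linD_apply, stdR]

lemma modeF_eq (k₀ : ℝ) (α : ℝ × ℝ) (n : ℤ × ℤ) (x : V3) :
    modeF k₀ α n x = Complex.exp (Complex.I * linD (dCv k₀ α n) x) := by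
  rw [modeF, linD_apply]
  congr 2
  simp [dCv, alphaN, rdot]

lemma hasFDerivAt_linD (d : C3) (x : V3) : HasFDerivAt (fun y => linD d y) (linD d) x :=
  (linD d).hasFDerivAt

lemma hasFDerivAt_modeF (k₀ : ℝ) (α : ℝ × ℝ) (n : ℤ × ℤ) (x : V3) :
    HasFDerivAt (fun y => modeF k₀ α n y)
      ((Complex.I * modeF k₀ α n x) • linD (dCv k₀ α n)) x := by
  have h1 : HasFDerivAt (fun y : V3 => Complex.I * linD (dCv k₀ α n) y)
      (Complex.I • linD (dCv k₀ α n)) x := ((linD (dCv k₀ α n)).hasFDerivAt).const_mul _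
  have h2 := h1.cexp
  have : (fun y => modeF k₀ α n y) =
      fun y => Complex.exp (Complex.I * linD (dCv k₀ α n) y) := by
    funext y; exact modeF_eq k₀ α n y
  rw [this]
  refine h2.congr_fderiv ?_
  rw [← modeF_eq, smul_smul]
  rw [mul_comm]

lemma norm_dCv_sum_le (k₀ : ℝ) (hk : 0 ≤ k₀) (α : ℝ × ℝ) (n : ℤ × ℤ) :
    ‖dCv k₀ α n 0‖ + ‖dCv k₀ α n 1‖ + ‖dCv k₀ α n 2‖ ≤
      (3 + k₀) * (1 + enorm3 (alphaN α n)) := by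
  have h0 : ‖dCv k₀ α n 0‖ = |alphaN α n 0| := by
    simp [dCv, Complex.norm_real, Real.norm_eq_abs]
  have h1 : ‖dCv k₀ α n 1‖ = |alphaN α n 1| := by
    simp [dCv, Complex.norm_real, Real.norm_eq_abs]
  have h2 : ‖dCv k₀ α n 2‖ ≤ k₀ + enorm3 (alphaN α n) := by
    have : dCv k₀ α n 2 = betaN k₀ α n := by
      simp [dCv, alphaN_two]
    rw [this]
    exact norm_betaN_le k₀ hk α n
  have e0 := abs_alphaN_le α n 0
  have e1 := abs_alphaN_le α n 1
  have epos := enorm3_nonneg (alphaN α n)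
  rw [h0, h1]
  nlinarith

end Aux2
section Aux3

/-- summable weight controlling mode `n`. -/
def wgt (k₀ : ℝ) (α : ℝ × ℝ) (En : ℤ × ℤ → C3) (h₀ : ℝ) (n : ℤ × ℤ) : ℝ :=
  (1 + enorm3 (alphaN α n)) * ‖En n‖ * Real.exp (-(betaN k₀ α n).im * h₀)

lemma wgt_nonneg (k₀ : ℝ) (α : ℝ × ℝ) (En : ℤ × ℤ → C3) (h₀ : ℝ) (n : ℤ × ℤ) :
    0 ≤ wgt k₀ α En h₀ n := by
  unfold wgt
  have := enorm3_nonneg (alphaN α n)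
  positivity

lemma norm_mode_mul_le (k₀ : ℝ) (α : ℝ × ℝ) (En : ℤ × ℤ → C3) (h₀ : ℝ) (n : ℤ × ℤ)
    (i : Fin 3) {x : V3} (hx : h₀ ≤ x 2) :
    ‖modeF k₀ α n x * En n i‖ ≤ wgt k₀ α En h₀ n := by
  rw [norm_mul, wgt]
  have h1 := norm_modeF_le k₀ α n (h₀ := h₀) hx
  have h2 : ‖En n i‖ ≤ ‖En n‖ := norm_le_pi_norm (En n) i
  have h3 := enorm3_nonneg (alphaN α n)
  have h4 : (0:ℝ) ≤ Real.exp (-(betaN k₀ α n).im * h₀) := (Real.exp_pos _).le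
  calc ‖modeF k₀ α n x‖ * ‖En n i‖ ≤ Real.exp (-(betaN k₀ α n).im * h₀) * ‖En n‖ :=
        mul_le_mul h1 h2 (norm_nonneg _) h4
    _ = 1 * ‖En n‖ * Real.exp (-(betaN k₀ α n).im * h₀) := by ring
    _ ≤ (1 + enorm3 (alphaN α n)) * ‖En n‖ * Real.exp (-(betaN k₀ α n).im * h₀) := by
        gcongr; linarith

lemma norm_mode_smul_le (k₀ : ℝ) (α : ℝ × ℝ) (En : ℤ × ℤ → C3) (h₀ : ℝ) (n : ℤ × ℤ)
    {x : V3} (hx : h₀ ≤ x 2) :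
    ‖modeF k₀ α n x • En n‖ ≤ wgt k₀ α En h₀ n := by
  rw [norm_smul, wgt]
  have h1 := norm_modeF_le k₀ α n (h₀ := h₀) hx
  have h3 := enorm3_nonneg (alphaN α n)
  have h4 : (0:ℝ) ≤ Real.exp (-(betaN k₀ α n).im * h₀) := (Real.exp_pos _).le
  calc ‖modeF k₀ α n x‖ * ‖En n‖ ≤ Real.exp (-(betaN k₀ α n).im * h₀) * ‖En n‖ :=
        mul_le_mul_of_nonneg_right h1 (norm_nonneg _)
    _ = 1 * ‖En n‖ * Real.exp (-(betaN k₀ α n).im * h₀) := by ring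
    _ ≤ (1 + enorm3 (alphaN α n)) * ‖En n‖ * Real.exp (-(betaN k₀ α n).im * h₀) := by
        gcongr; linarith

lemma norm_mode_mul_le' (k₀ : ℝ) (α : ℝ × ℝ) (En : ℤ × ℤ → C3) (h₀ : ℝ) (n : ℤ × ℤ)
    (i : Fin 3) {x : V3} (hx : h₀ ≤ x 2) :
    ‖modeF k₀ α n x * En n i‖ ≤ ‖En n‖ * Real.exp (-(betaN k₀ α n).im * h₀) := by
  rw [norm_mul]
  have h1 := norm_modeF_le k₀ α n (h₀ := h₀) hx
  have h2 : ‖En n i‖ ≤ ‖En n‖ := norm_le_pi_norm (En n) i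
  calc ‖modeF k₀ α n x‖ * ‖En n i‖ ≤ Real.exp (-(betaN k₀ α n).im * h₀) * ‖En n‖ :=
        mul_le_mul h1 h2 (norm_nonneg _) (Real.exp_pos _).le
    _ = _ := mul_comm _ _

lemma norm_dCv_le (k₀ : ℝ) (hk : 0 ≤ k₀) (α : ℝ × ℝ) (n : ℤ × ℤ) (j : Fin 3) :
    ‖dCv k₀ α n j‖ ≤ (3 + k₀) * (1 + enorm3 (alphaN α n)) := by
  have h := norm_dCv_sum_le k₀ hk α n
  fin_cases j
  · show ‖dCv k₀ α n 0‖ ≤ _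
    have := norm_nonneg (dCv k₀ α n 1); have := norm_nonneg (dCv k₀ α n 2); linarith
  · show ‖dCv k₀ α n 1‖ ≤ _
    have := norm_nonneg (dCv k₀ α n 0); have := norm_nonneg (dCv k₀ α n 2); linarith
  · show ‖dCv k₀ α n 2‖ ≤ _
    have := norm_nonneg (dCv k₀ α n 0); have := norm_nonneg (dCv k₀ α n 1); linarith

lemma norm_deriv_term_le (k₀ : ℝ) (hk : 0 ≤ k₀) (α : ℝ × ℝ) (En : ℤ × ℤ → C3) (h₀ : ℝ)
    (n : ℤ × ℤ) (i : Fin 3) {x : V3} (hx : h₀ ≤ x 2) :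
    ‖(Complex.I * modeF k₀ α n x * En n i) • linD (dCv k₀ α n)‖ ≤
      (3 + k₀) * wgt k₀ α En h₀ n := by
  refine le_trans (ContinuousLinearMap.opNorm_smul_le _ _) ?_
  have h1 : ‖Complex.I * modeF k₀ α n x * En n i‖ ≤ ‖En n‖ * Real.exp (-(betaN k₀ α n).im * h₀) := by
    rw [mul_assoc, norm_mul, Complex.norm_I, one_mul]
    exact norm_mode_mul_le' k₀ α En h₀ n i hx
  have h2 := (norm_linD_le (dCv k₀ α n)).trans (norm_dCv_sum_le k₀ hk α n)
  have h3 : (0:ℝ) ≤ ‖En n‖ * Real.exp (-(betaN k₀ α n).im * h₀) := by positivity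
  have h4 : (0:ℝ) ≤ (3 + k₀) * (1 + enorm3 (alphaN α n)) := by
    have := enorm3_nonneg (alphaN α n); positivity
  calc ‖Complex.I * modeF k₀ α n x * En n i‖ * ‖linD (dCv k₀ α n)‖
      ≤ (‖En n‖ * Real.exp (-(betaN k₀ α n).im * h₀)) * ((3 + k₀) * (1 + enorm3 (alphaN α n))) := by
        apply mul_le_mul h1 h2 (norm_nonneg _) h3
    _ = (3 + k₀) * wgt k₀ α En h₀ n := by rw [wgt]; ring

variable {k₀ : ℝ} {α : ℝ × ℝ} {En : ℤ × ℤ → C3} {h₀ : ℝ}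

lemma summable_mode_mul (hsum : Summable (wgt k₀ α En h₀)) (i : Fin 3)
    {x : V3} (hx : h₀ ≤ x 2) :
    Summable fun n => modeF k₀ α n x * En n i :=
  Summable.of_norm_bounded hsum (fun n => norm_mode_mul_le k₀ α En h₀ n i hx)

lemma summable_mode_smul (hsum : Summable (wgt k₀ α En h₀))
    {x : V3} (hx : h₀ ≤ x 2) :
    Summable fun n => modeF k₀ α n x • En n :=
  Summable.of_norm_bounded hsum (fun n => norm_mode_smul_le k₀ α En h₀ n hx)

lemma ray_apply (hsum : Summable (wgt k₀ α En h₀)) {x : V3} (hx : h₀ ≤ x 2) (i : Fin 3) :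
    rayleighSeries k₀ α En x i = ∑' n, modeF k₀ α n x * En n i := by
  rw [rayleighSeries]
  rw [show (∑' n : ℤ × ℤ,
      Complex.exp (Complex.I * ((rdot (alphaN α n) x : ℝ) + betaN k₀ α n * (x 2 : ℝ))) • En n)
    = ∑' n : ℤ × ℤ, modeF k₀ α n x • En n from rfl]
  rw [tsum_apply (summable_mode_smul hsum hx)]
  rfl

/-- the open upper region. -/
def upReg (h₀ : ℝ) : Set V3 := {y : V3 | h₀ < y 2}

lemma isOpen_upReg : IsOpen (upReg h₀) := isOpen_lt continuous_const (continuous_apply 2)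

lemma isPreconnected_upReg : IsPreconnected (upReg h₀) := by
  apply Convex.isPreconnected
  have : IsLinearMap ℝ (fun y : V3 => y 2) := ⟨fun _ _ => rfl, fun _ _ => rfl⟩
  exact convex_halfSpace_gt this h₀

lemma hasFDerivAt_raycomp (hk : 0 ≤ k₀) (hsum : Summable (wgt k₀ α En h₀)) (i : Fin 3)
    {x : V3} (hx : h₀ < x 2) :
    HasFDerivAt (fun y => ∑' n, modeF k₀ α n y * En n i)
      (∑' n, (Complex.I * modeF k₀ α n x * En n i) • linD (dCv k₀ α n)) x := by
  apply hasFDerivAt_tsum_of_isPreconnected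
    (hsum.mul_left (3 + k₀)) isOpen_upReg isPreconnected_upReg
    (f' := fun n y => (Complex.I * modeF k₀ α n y * En n i) • linD (dCv k₀ α n))
    (x₀ := x)
  · intro n y _
    exact (hasFDerivAt_modeF k₀ α n y).mul_const (En n i) |>.congr_fderiv (by
      rw [smul_smul]; ring_nf)
  · intro n y hy
    exact norm_deriv_term_le k₀ hk α En h₀ n i (le_of_lt hy)
  · exact hx
  · exact summable_mode_mul hsum i (le_of_lt hx)
  · exact hx

end Aux3
section Aux4

variable {k₀ : ℝ} {α : ℝ × ℝ} {En : ℤ × ℤ → C3} {h₀ : ℝ}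

lemma summable_dmode (hk : 0 ≤ k₀) (hsum : Summable (wgt k₀ α En h₀)) (i j : Fin 3)
    {x : V3} (hx : h₀ ≤ x 2) :
    Summable fun n => Complex.I * dCv k₀ α n j * (modeF k₀ α n x * En n i) := by
  apply Summable.of_norm_bounded (hsum.mul_left (3 + k₀))
  intro n
  rw [norm_mul, norm_mul, Complex.norm_I, one_mul]
  have h1 := norm_dCv_le k₀ hk α n j
  have h2 := norm_mode_mul_le' k₀ α En h₀ n i hx
  have h4 : (0:ℝ) ≤ (3 + k₀) * (1 + enorm3 (alphaN α n)) := by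
    have := enorm3_nonneg (alphaN α n); positivity
  calc ‖dCv k₀ α n j‖ * ‖modeF k₀ α n x * En n i‖
      ≤ ((3 + k₀) * (1 + enorm3 (alphaN α n))) * (‖En n‖ * Real.exp (-(betaN k₀ α n).im * h₀)) :=
        mul_le_mul h1 h2 (norm_nonneg _) h4
    _ = (3 + k₀) * wgt k₀ α En h₀ n := by rw [wgt]; ring

lemma pd_ray (hk : 0 ≤ k₀) (hsum : Summable (wgt k₀ α En h₀)) (i j : Fin 3)
    {x : V3} (hx : h₀ < x 2) :
    pd j (fun y => rayleighSeries k₀ α En y i) x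
      = ∑' n, Complex.I * dCv k₀ α n j * (modeF k₀ α n x * En n i) := by
  have hW := hasFDerivAt_raycomp hk hsum i hx
  have hEq : (fun y => rayleighSeries k₀ α En y i)
      =ᶠ[nhds x] (fun y => ∑' n, modeF k₀ α n y * En n i) := by
    filter_upwards [isOpen_upReg.mem_nhds hx] with y hy
    exact ray_apply hsum (le_of_lt hy) i
  have hsumL : Summable (fun n : ℤ × ℤ =>
      (Complex.I * modeF k₀ α n x * En n i) • linD (dCv k₀ α n)) :=
    Summable.of_norm_bounded (hsum.mul_left (3 + k₀))
      (fun n => norm_deriv_term_le k₀ hk α En h₀ n i (le_of_lt hx))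
  rw [pd, hEq.fderiv_eq, hW.fderiv]
  calc (∑' n : ℤ × ℤ, (Complex.I * modeF k₀ α n x * En n i) • linD (dCv k₀ α n)) (stdR j)
      = ∑' n : ℤ × ℤ, ((Complex.I * modeF k₀ α n x * En n i) • linD (dCv k₀ α n)) (stdR j) :=
        (((ContinuousLinearMap.apply ℝ ℂ (stdR j)).hasSum hsumL.hasSum).tsum_eq).symm
    _ = _ := by
        refine tsum_congr fun n => ?_
        rw [ContinuousLinearMap.smul_apply, linD_stdR]
        simp only [smul_eq_mul]
        ring

lemma curl_ray (hk : 0 ≤ k₀) (hsum : Summable (wgt k₀ α En h₀)) {x : V3}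
    (hx : h₀ < x 2) (i : Fin 3) :
    curl3 (rayleighSeries k₀ α En) x i
      = ∑' n, Complex.I * cross (dCv k₀ α n) (En n) i * modeF k₀ α n x := by
  fin_cases i
  · show pd 1 (fun y => rayleighSeries k₀ α En y 2) x
      - pd 2 (fun y => rayleighSeries k₀ α En y 1) x = _
    rw [pd_ray hk hsum 2 1 hx, pd_ray hk hsum 1 2 hx,
      ← Summable.tsum_sub (summable_dmode hk hsum 2 1 (le_of_lt hx)) (summable_dmode hk hsum 1 2 (le_of_lt hx))]
    refine tsum_congr fun n => ?_
    simp only [cross]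
    norm_num
    ring
  · show pd 2 (fun y => rayleighSeries k₀ α En y 0) x
      - pd 0 (fun y => rayleighSeries k₀ α En y 2) x = _
    rw [pd_ray hk hsum 0 2 hx, pd_ray hk hsum 2 0 hx,
      ← Summable.tsum_sub (summable_dmode hk hsum 0 2 (le_of_lt hx)) (summable_dmode hk hsum 2 0 (le_of_lt hx))]
    refine tsum_congr fun n => ?_
    simp only [cross]
    norm_num
    ring
  · show pd 0 (fun y => rayleighSeries k₀ α En y 1) x
      - pd 1 (fun y => rayleighSeries k₀ α En y 0) x = _
    rw [pd_ray hk hsum 1 0 hx, pd_ray hk hsum 0 1 hx,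
      ← Summable.tsum_sub (summable_dmode hk hsum 1 0 (le_of_lt hx)) (summable_dmode hk hsum 0 1 (le_of_lt hx))]
    refine tsum_congr fun n => ?_
    simp only [cross]
    norm_num
    ring

lemma norm_cross_dCv_le (hk : 0 ≤ k₀) (n : ℤ × ℤ) (i : Fin 3) :
    ‖cross (dCv k₀ α n) (En n) i‖ ≤
      2 * ((3 + k₀) * (1 + enorm3 (alphaN α n))) * ‖En n‖ := by
  have hd : ∀ j : Fin 3, ‖dCv k₀ α n j‖ ≤ (3 + k₀) * (1 + enorm3 (alphaN α n)) :=
    norm_dCv_le k₀ hk α n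
  have hE : ∀ j : Fin 3, ‖En n j‖ ≤ ‖En n‖ := norm_le_pi_norm (En n)
  have key : ∀ (j₁ j₂ j₃ j₄ : Fin 3),
      ‖dCv k₀ α n j₁ * En n j₂ - dCv k₀ α n j₃ * En n j₄‖ ≤
        2 * ((3 + k₀) * (1 + enorm3 (alphaN α n))) * ‖En n‖ := by
    intro j₁ j₂ j₃ j₄
    calc ‖dCv k₀ α n j₁ * En n j₂ - dCv k₀ α n j₃ * En n j₄‖
        ≤ ‖dCv k₀ α n j₁ * En n j₂‖ + ‖dCv k₀ α n j₃ * En n j₄‖ := norm_sub_le _ _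
      _ = ‖dCv k₀ α n j₁‖ * ‖En n j₂‖ + ‖dCv k₀ α n j₃‖ * ‖En n j₄‖ := by
          rw [norm_mul, norm_mul]
      _ ≤ ((3 + k₀) * (1 + enorm3 (alphaN α n))) * ‖En n‖
          + ((3 + k₀) * (1 + enorm3 (alphaN α n))) * ‖En n‖ := by
          gcongr
          · exact (norm_nonneg _).trans (hd j₁)
          · exact hd j₁
          · exact hE j₂
          · exact (norm_nonneg _).trans (hd j₃)
          · exact hd j₃
          · exact hE j₄
      _ = 2 * ((3 + k₀) * (1 + enorm3 (alphaN α n))) * ‖En n‖ := by ring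
  fin_cases i
  · exact key 1 2 2 1
  · exact key 2 0 0 2
  · exact key 0 1 1 0

lemma norm_curlmode_le (hk : 0 ≤ k₀) (n : ℤ × ℤ) (i : Fin 3)
    {x : V3} (hx : h₀ ≤ x 2) :
    ‖Complex.I * cross (dCv k₀ α n) (En n) i * modeF k₀ α n x‖ ≤
      2 * ((3 + k₀) * wgt k₀ α En h₀ n) := by
  rw [norm_mul, norm_mul, Complex.norm_I, one_mul]
  have hcross := norm_cross_dCv_le (α := α) (En := En) hk n i
  have hm := norm_modeF_le k₀ α n (h₀ := h₀) hx
  calc ‖cross (dCv k₀ α n) (En n) i‖ * ‖modeF k₀ α n x‖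
      ≤ (2 * ((3 + k₀) * (1 + enorm3 (alphaN α n))) * ‖En n‖) *
          Real.exp (-(betaN k₀ α n).im * h₀) := by
        apply mul_le_mul hcross hm (norm_nonneg _)
        have := enorm3_nonneg (alphaN α n); positivity
    _ = 2 * ((3 + k₀) * wgt k₀ α En h₀ n) := by rw [wgt]; ring

lemma summable_norm_curlmode (hk : 0 ≤ k₀) (hsum : Summable (wgt k₀ α En h₀)) (i : Fin 3)
    {x : V3} (hx : h₀ ≤ x 2) :
    Summable fun n => ‖Complex.I * cross (dCv k₀ α n) (En n) i * modeF k₀ α n x‖ :=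
  Summable.of_nonneg_of_le (fun n => norm_nonneg _)
    (fun n => norm_curlmode_le hk n i hx) ((hsum.mul_left (3 + k₀)).mul_left 2)

lemma summable_norm_mode_mul (hsum : Summable (wgt k₀ α En h₀)) (i : Fin 3)
    {x : V3} (hx : h₀ ≤ x 2) :
    Summable fun n => ‖modeF k₀ α n x * En n i‖ :=
  Summable.of_nonneg_of_le (fun n => norm_nonneg _)
    (fun n => norm_mode_mul_le k₀ α En h₀ n i hx) hsum

end Aux4
section Aux5

open MeasureTheory

lemma int_exp (k : ℤ) :
    (∫ x in Set.Ioo (0:ℝ) (2*π), Complex.exp (Complex.I * (k : ℂ) * (x : ℂ)))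
      = if k = 0 then ((2*π : ℝ) : ℂ) else 0 := by
  split
  case isTrue hk =>
    subst hk
    simp only [Int.cast_zero, mul_zero, zero_mul, Complex.exp_zero]
    rw [setIntegral_const]
    rw [measureReal_def, Real.volume_Ioo]
    rw [ENNReal.toReal_ofReal (by rw [sub_zero]; positivity : (0:ℝ) ≤ 2*π - 0)]
    simp
  case isFalse hk =>
    have hc : (Complex.I * (k : ℂ)) ≠ 0 := by
      simp [Complex.I_ne_zero, Complex.ext_iff]
      exact_mod_cast hk
    rw [← MeasureTheory.integral_Ioc_eq_integral_Ioo,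
      ← intervalIntegral.integral_of_le (by positivity : (0:ℝ) ≤ 2*π)]
    have := integral_exp_mul_complex (a := 0) (b := 2*π) hc
    rw [show (∫ x in (0:ℝ)..(2*π), Complex.exp (Complex.I * (k:ℂ) * (x:ℂ)))
        = ∫ x in (0:ℝ)..(2*π), Complex.exp ((Complex.I * (k:ℂ)) * (x:ℂ)) from rfl, this]
    rw [show (Complex.I * (k:ℂ)) * ((2*π : ℝ):ℂ) = (k : ℂ) * (2 * (π:ℂ) * Complex.I) by
      push_cast; ring]
    rw [Complex.exp_int_mul_two_pi_mul_I]
    simp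

lemma cell_integral_mul (f g : ℝ → ℂ) :
    (∫ x' in cellSq, f x'.1 * g x'.2)
      = (∫ x in Set.Ioo (0:ℝ) (2*π), f x) * (∫ x in Set.Ioo (0:ℝ) (2*π), g x) := by
  rw [cellSq, Measure.volume_eq_prod, ← Measure.prod_restrict, ← MeasureTheory.integral_prod_mul]

lemma mode_prod (k₀ : ℝ) (α : ℝ × ℝ) (h : ℝ) (n m : ℤ × ℤ) (x' : ℝ × ℝ) :
    modeF k₀ α n (pt3 x' h) * modeF k₀ (-α) m (pt3 x' h)
      = (Complex.exp (Complex.I * (betaN k₀ α n + betaN k₀ (-α) m) * (h:ℂ)))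
        * (Complex.exp (Complex.I * ((n.1 + m.1 : ℤ) : ℂ) * (x'.1 : ℂ))
          * Complex.exp (Complex.I * ((n.2 + m.2 : ℤ) : ℂ) * (x'.2 : ℂ))) := by
  rw [modeF, modeF, ← Complex.exp_add, ← Complex.exp_add, ← Complex.exp_add]
  congr 1
  have h0 : pt3 x' h 0 = x'.1 := rfl
  have h1 : pt3 x' h 1 = x'.2 := rfl
  have h2 : pt3 x' h 2 = h := rfl
  simp only [rdot, alphaN, h0, h1, h2]
  push_cast
  ring_nf
  simp [alphaN]
  push_cast
  ring

lemma continuous_modeF_pt3 (k₀ : ℝ) (α : ℝ × ℝ) (h : ℝ) (n : ℤ × ℤ) :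
    Continuous fun x' : ℝ × ℝ => modeF k₀ α n (pt3 x' h) := by
  have : (fun x' : ℝ × ℝ => modeF k₀ α n (pt3 x' h))
      = fun x' : ℝ × ℝ => Complex.exp (Complex.I *
          (((alphaN α n 0 * x'.1 + alphaN α n 1 * x'.2 + alphaN α n 2 * h : ℝ) : ℂ)
            + betaN k₀ α n * (h : ℂ))) := by
    funext x'
    rfl
  rw [this]
  fun_prop

end Aux5
section Aux6

/-- the coefficient of the `(n,m)` mode pair in the Green integrand. -/
def Kco (k₀ : ℝ) (α : ℝ × ℝ) (En Et : ℤ × ℤ → C3) (n m : ℤ × ℤ) : ℂ :=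
  Complex.I * cross (dCv k₀ α n) (En n) 0 * Et m 1
    - Complex.I * cross (dCv k₀ α n) (En n) 1 * Et m 0
    + Complex.I * cross (dCv k₀ (-α) m) (Et m) 1 * En n 0
    - Complex.I * cross (dCv k₀ (-α) m) (Et m) 0 * En n 1

lemma betaN_neg_neg (k₀ : ℝ) (α : ℝ × ℝ) (n : ℤ × ℤ) :
    betaN k₀ (-α) (-n) = betaN k₀ α n := by
  unfold betaN
  have e1 : ((-α).1 + ((-n).1 : ℤ) : ℝ) = -(α.1 + n.1) := by
    simp
    push_cast
    ring
  have e2 : ((-α).2 + ((-n).2 : ℤ) : ℝ) = -(α.2 + n.2) := by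
    simp
    push_cast
    ring
  rw [e1, e2]
  rw [show (-(α.1 + (n.1:ℝ))) ^ 2 = (α.1 + n.1) ^ 2 by ring,
      show (-(α.2 + (n.2:ℝ))) ^ 2 = (α.2 + n.2) ^ 2 by ring]

lemma alphaN_neg_neg (α : ℝ × ℝ) (n : ℤ × ℤ) (j : Fin 3) :
    alphaN (-α) (-n) j = -(alphaN α n j) := by
  fin_cases j
  · show ((-α).1 + ((-n).1 : ℤ) : ℝ) = -(α.1 + n.1)
    simp; push_cast; ring
  · show ((-α).2 + ((-n).2 : ℤ) : ℝ) = -(α.2 + n.2)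
    simp; push_cast; ring
  · show (0:ℝ) = -0
    norm_num

lemma alphaN_two' (α : ℝ × ℝ) (n : ℤ × ℤ) : alphaN α n 2 = 0 := rfl

lemma Kco_zero (k₀ : ℝ) (α : ℝ × ℝ) (En Et : ℤ × ℤ → C3) (n : ℤ × ℤ)
    (hE : cdot (toC3 (alphaN α n)) (En n) + betaN k₀ α n * En n 2 = 0)
    (hT : cdot (toC3 (alphaN (-α) (-n))) (Et (-n)) + betaN k₀ (-α) (-n) * Et (-n) 2 = 0) :
    Kco k₀ α En Et n (-n) = 0 := by
  have hB := betaN_neg_neg k₀ α n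
  have hE' : ((alphaN α n 0 : ℝ) : ℂ) * En n 0 + ((alphaN α n 1 : ℝ) : ℂ) * En n 1
      + betaN k₀ α n * En n 2 = 0 := by
    have h := hE
    simp only [cdot, toC3, alphaN_two'] at h
    push_cast at h
    linear_combination h
  have hT' : -((alphaN α n 0 : ℝ) : ℂ) * Et (-n) 0 + -((alphaN α n 1 : ℝ) : ℂ) * Et (-n) 1
      + betaN k₀ α n * Et (-n) 2 = 0 := by
    have h := hT
    simp only [cdot, toC3, alphaN_neg_neg, alphaN_two', hB] at h
    push_cast at h
    linear_combination h
  have d0 : dCv k₀ α n 0 = ((alphaN α n 0 : ℝ) : ℂ) := by simp [dCv]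
  have d1 : dCv k₀ α n 1 = ((alphaN α n 1 : ℝ) : ℂ) := by simp [dCv]
  have d2 : dCv k₀ α n 2 = betaN k₀ α n := by simp [dCv, alphaN_two']
  have t0 : dCv k₀ (-α) (-n) 0 = -((alphaN α n 0 : ℝ) : ℂ) := by
    simp [dCv, alphaN_neg_neg]
  have t1 : dCv k₀ (-α) (-n) 1 = -((alphaN α n 1 : ℝ) : ℂ) := by
    simp [dCv, alphaN_neg_neg]
  have t2 : dCv k₀ (-α) (-n) 2 = betaN k₀ α n := by
    simp [dCv, alphaN_neg_neg, alphaN_two', hB]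
  simp only [Kco, cross, Matrix.cons_val_zero, Matrix.cons_val_one, Matrix.head_cons,
    d0, d1, d2, t0, t1, t2]
  linear_combination (-(Complex.I) * En n 2) * hT' + (Complex.I * Et (-n) 2) * hE'

end Aux6
section Aux7

lemma green_combine (a0 a1 e0 e1 b0 b1 w0 w1 : ℤ × ℤ → ℂ)
    (ha0 : Summable fun n => ‖a0 n‖) (ha1 : Summable fun n => ‖a1 n‖)
    (he0 : Summable fun n => ‖e0 n‖) (he1 : Summable fun n => ‖e1 n‖)
    (hb0 : Summable fun n => ‖b0 n‖) (hb1 : Summable fun n => ‖b1 n‖)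
    (hw0 : Summable fun n => ‖w0 n‖) (hw1 : Summable fun n => ‖w1 n‖) :
    ((∑' n, a0 n) * (∑' m, w1 m) - (∑' n, a1 n) * (∑' m, w0 m))
      - ((∑' m, b0 m) * (∑' n, e1 n) - (∑' m, b1 m) * (∑' n, e0 n))
    = ∑' p : (ℤ × ℤ) × (ℤ × ℤ),
        (a0 p.1 * w1 p.2 - a1 p.1 * w0 p.2 + b1 p.2 * e0 p.1 - b0 p.2 * e1 p.1) := by
  rw [tsum_mul_tsum_of_summable_norm ha0 hw1, tsum_mul_tsum_of_summable_norm ha1 hw0,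
    mul_comm (∑' m, b0 m) _, tsum_mul_tsum_of_summable_norm he1 hb0,
    mul_comm (∑' m, b1 m) _, tsum_mul_tsum_of_summable_norm he0 hb1]
  have S1 := summable_mul_of_summable_norm ha0 hw1
  have S2 := summable_mul_of_summable_norm ha1 hw0
  have S3 := summable_mul_of_summable_norm he1 hb0
  have S4 := summable_mul_of_summable_norm he0 hb1
  rw [← Summable.tsum_sub S1 S2, ← Summable.tsum_sub S3 S4, ← Summable.tsum_sub (S1.sub S2) (S3.sub S4)]
  exact tsum_congr fun p => by ring

variable {k₀ : ℝ} {α : ℝ × ℝ} {En Et : ℤ × ℤ → C3} {h₀ : ℝ}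

lemma integrand_eq (hk : 0 ≤ k₀) (hhE : Summable (wgt k₀ α En h₀))
    (hhT : Summable (wgt k₀ (-α) Et h₀)) {h : ℝ} (hh : h₀ < h) (x' : ℝ × ℝ) :
    cdot (cross (stdC 2) (curl3 (rayleighSeries k₀ α En) (pt3 x' h)))
        (rayleighSeries k₀ (-α) Et (pt3 x' h))
      - cdot (cross (stdC 2) (curl3 (rayleighSeries k₀ (-α) Et) (pt3 x' h)))
        (rayleighSeries k₀ α En (pt3 x' h))
    = ∑' p : (ℤ × ℤ) × (ℤ × ℤ), Kco k₀ α En Et p.1 p.2 *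
        (modeF k₀ α p.1 (pt3 x' h) * modeF k₀ (-α) p.2 (pt3 x' h)) := by
  have hx : h₀ < (pt3 x' h) 2 := hh
  have cdot_e3 : ∀ v w : C3, cdot (cross (stdC 2) v) w = v 0 * w 1 - v 1 * w 0 := by
    intro v w
    simp [cdot, cross, stdC]
    ring
  rw [cdot_e3, cdot_e3]
  rw [curl_ray hk hhE hx 0, curl_ray hk hhE hx 1,
    curl_ray hk hhT hx 0, curl_ray hk hhT hx 1,
    ray_apply hhE hx.le 0, ray_apply hhE hx.le 1,
    ray_apply hhT hx.le 0, ray_apply hhT hx.le 1]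
  rw [green_combine _ _ _ _ _ _ _ _
    (summable_norm_curlmode hk hhE 0 hx.le) (summable_norm_curlmode hk hhE 1 hx.le)
    (summable_norm_mode_mul hhE 0 hx.le) (summable_norm_mode_mul hhE 1 hx.le)
    (summable_norm_curlmode hk hhT 0 hx.le) (summable_norm_curlmode hk hhT 1 hx.le)
    (summable_norm_mode_mul hhT 0 hx.le) (summable_norm_mode_mul hhT 1 hx.le)]
  exact tsum_congr fun p => by rw [Kco]; ring

end Aux7
section Aux8

open MeasureTheory

/-- a single mode-pair term of the integrand. -/
def termF (k₀ : ℝ) (α : ℝ × ℝ) (En Et : ℤ × ℤ → C3) (h : ℝ)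
    (p : (ℤ × ℤ) × (ℤ × ℤ)) (x' : ℝ × ℝ) : ℂ :=
  Kco k₀ α En Et p.1 p.2 * (modeF k₀ α p.1 (pt3 x' h) * modeF k₀ (-α) p.2 (pt3 x' h))

lemma cellSq_vol_lt_top : volume cellSq < ⊤ := by
  rw [cellSq, Measure.volume_eq_prod, Measure.prod_prod, Real.volume_Ioo]
  exact ENNReal.mul_lt_top ENNReal.ofReal_lt_top ENNReal.ofReal_lt_top

instance : IsFiniteMeasure (volume.restrict cellSq) := by
  constructor
  rw [Measure.restrict_apply_univ]
  exact cellSq_vol_lt_top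

lemma continuous_termF (k₀ : ℝ) (α : ℝ × ℝ) (En Et : ℤ × ℤ → C3) (h : ℝ)
    (p : (ℤ × ℤ) × (ℤ × ℤ)) : Continuous (termF k₀ α En Et h p) :=
  continuous_const.mul ((continuous_modeF_pt3 k₀ α h p.1).mul
    (continuous_modeF_pt3 k₀ (-α) h p.2))

lemma norm_termF (k₀ : ℝ) (α : ℝ × ℝ) (En Et : ℤ × ℤ → C3) (h : ℝ)
    (p : (ℤ × ℤ) × (ℤ × ℤ)) (x' : ℝ × ℝ) :
    ‖termF k₀ α En Et h p x'‖ = ‖Kco k₀ α En Et p.1 p.2‖ *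
      (Real.exp (-(betaN k₀ α p.1).im * h) * Real.exp (-(betaN k₀ (-α) p.2).im * h)) := by
  rw [termF, norm_mul, norm_mul, norm_modeF, norm_modeF]
  rw [show pt3 x' h 2 = h from rfl]

lemma integrable_termF (k₀ : ℝ) (α : ℝ × ℝ) (En Et : ℤ × ℤ → C3) (h : ℝ)
    (p : (ℤ × ℤ) × (ℤ × ℤ)) :
    Integrable (termF k₀ α En Et h p) (volume.restrict cellSq) := by
  apply Integrable.mono' (integrable_const (‖Kco k₀ α En Et p.1 p.2‖ *
      (Real.exp (-(betaN k₀ α p.1).im * h) * Real.exp (-(betaN k₀ (-α) p.2).im * h))))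
    (continuous_termF k₀ α En Et h p).aestronglyMeasurable
  exact ae_of_all _ fun x' => le_of_eq (norm_termF k₀ α En Et h p x')

lemma integral_norm_termF (k₀ : ℝ) (α : ℝ × ℝ) (En Et : ℤ × ℤ → C3) (h : ℝ)
    (p : (ℤ × ℤ) × (ℤ × ℤ)) :
    (∫ x' in cellSq, ‖termF k₀ α En Et h p x'‖)
      = (volume cellSq).toReal * (‖Kco k₀ α En Et p.1 p.2‖ *
        (Real.exp (-(betaN k₀ α p.1).im * h) * Real.exp (-(betaN k₀ (-α) p.2).im * h))) := by
  rw [integral_congr_ae (ae_of_all _ fun x' => norm_termF k₀ α En Et h p x'),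
    setIntegral_const, smul_eq_mul, measureReal_def]

lemma norm_Kco_le {k₀ : ℝ} (hk : 0 ≤ k₀) (α : ℝ × ℝ) (En Et : ℤ × ℤ → C3) (n m : ℤ × ℤ) :
    ‖Kco k₀ α En Et n m‖ ≤ 8 * (3 + k₀) *
      ((1 + enorm3 (alphaN α n)) * ‖En n‖) * ((1 + enorm3 (alphaN (-α) m)) * ‖Et m‖) := by
  have hcE0 := norm_cross_dCv_le (α := α) (En := En) hk n 0
  have hcE1 := norm_cross_dCv_le (α := α) (En := En) hk n 1
  have hcT0 := norm_cross_dCv_le (α := -α) (En := Et) hk m 0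
  have hcT1 := norm_cross_dCv_le (α := -α) (En := Et) hk m 1
  have hW : ∀ j : Fin 3, ‖Et m j‖ ≤ ‖Et m‖ := norm_le_pi_norm (Et m)
  have hEj : ∀ j : Fin 3, ‖En n j‖ ≤ ‖En n‖ := norm_le_pi_norm (En n)
  have e1 : (0:ℝ) ≤ enorm3 (alphaN α n) := enorm3_nonneg _
  have e2 : (0:ℝ) ≤ enorm3 (alphaN (-α) m) := enorm3_nonneg _
  have key : ∀ (a b : C3) (ca cb : ℝ) (i j : Fin 3),
      ‖cross (dCv k₀ α n) a i‖ ≤ ca → ‖b j‖ ≤ cb → 0 ≤ cb →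
      True := fun _ _ _ _ _ _ _ _ _ => trivial
  calc ‖Kco k₀ α En Et n m‖
      ≤ ‖Complex.I * cross (dCv k₀ α n) (En n) 0 * Et m 1‖
        + ‖Complex.I * cross (dCv k₀ α n) (En n) 1 * Et m 0‖
        + ‖Complex.I * cross (dCv k₀ (-α) m) (Et m) 1 * En n 0‖
        + ‖Complex.I * cross (dCv k₀ (-α) m) (Et m) 0 * En n 1‖ := by
        rw [Kco]
        refine le_trans (norm_sub_le _ _) ?_
        gcongr
        refine le_trans (norm_add_le _ _) ?_
        gcongr
        exact norm_sub_le _ _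
    _ ≤ (2 * ((3 + k₀) * (1 + enorm3 (alphaN α n))) * ‖En n‖) * ‖Et m‖
        + (2 * ((3 + k₀) * (1 + enorm3 (alphaN α n))) * ‖En n‖) * ‖Et m‖
        + (2 * ((3 + k₀) * (1 + enorm3 (alphaN (-α) m))) * ‖Et m‖) * ‖En n‖
        + (2 * ((3 + k₀) * (1 + enorm3 (alphaN (-α) m))) * ‖Et m‖) * ‖En n‖ := by
        gcongr <;>
          first
            | (rw [norm_mul, norm_mul, Complex.norm_I, one_mul]
               apply mul_le_mul (by assumption) ?_ (norm_nonneg _) ?_)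
            | skip
        · exact hW 1
        · positivity
        · exact hW 0
        · positivity
        · exact hEj 0
        · positivity
        · exact hEj 1
        · positivity
    _ ≤ 8 * (3 + k₀) * ((1 + enorm3 (alphaN α n)) * ‖En n‖)
        * ((1 + enorm3 (alphaN (-α) m)) * ‖Et m‖) := by
        nlinarith [norm_nonneg (En n), norm_nonneg (Et m),
          mul_nonneg (norm_nonneg (En n)) (norm_nonneg (Et m)),
          mul_nonneg e1 e2, mul_nonneg (mul_nonneg e1 e2)
            (mul_nonneg (norm_nonneg (En n)) (norm_nonneg (Et m))),
          mul_nonneg e1 (mul_nonneg (norm_nonneg (En n)) (norm_nonneg (Et m))),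
          mul_nonneg e2 (mul_nonneg (norm_nonneg (En n)) (norm_nonneg (Et m)))]

end Aux8
section Aux9

open MeasureTheory

lemma integral_termF_zero (k₀ : ℝ) (α : ℝ × ℝ) (En Et : ℤ × ℤ → C3) (h : ℝ)
    (hE : ∀ n : ℤ × ℤ, cdot (toC3 (alphaN α n)) (En n) + betaN k₀ α n * En n 2 = 0)
    (hT : ∀ n : ℤ × ℤ, cdot (toC3 (alphaN (-α) n)) (Et n) + betaN k₀ (-α) n * Et n 2 = 0)
    (p : (ℤ × ℤ) × (ℤ × ℤ)) :
    (∫ x' in cellSq, termF k₀ α En Et h p x') = 0 := by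
  obtain ⟨n, m⟩ := p
  have hsplit : ∀ x' : ℝ × ℝ, termF k₀ α En Et h (n, m) x'
      = (Kco k₀ α En Et n m
          * Complex.exp (Complex.I * (betaN k₀ α n + betaN k₀ (-α) m) * (h:ℂ))) *
        ((fun x : ℝ => Complex.exp (Complex.I * ((n.1 + m.1 : ℤ) : ℂ) * (x : ℂ))) x'.1 *
         (fun x : ℝ => Complex.exp (Complex.I * ((n.2 + m.2 : ℤ) : ℂ) * (x : ℂ))) x'.2) := by
    intro x'
    rw [termF, mode_prod]
    ring
  rw [integral_congr_ae (ae_of_all _ hsplit), integral_const_mul,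
    cell_integral_mul (fun x : ℝ => Complex.exp (Complex.I * ((n.1 + m.1 : ℤ) : ℂ) * (x : ℂ)))
      (fun x : ℝ => Complex.exp (Complex.I * ((n.2 + m.2 : ℤ) : ℂ) * (x : ℂ))),
    int_exp, int_exp]
  by_cases hm : m = -n
  · subst hm
    rw [Kco_zero k₀ α En Et n (hE n) (hT (-n))]
    simp
  · have hne : ¬(n.1 + m.1 = 0) ∨ ¬(n.2 + m.2 = 0) := by
      by_contra hc
      push_neg at hc
      exact hm (Prod.ext (by show m.1 = -n.1; omega) (by show m.2 = -n.2; omega))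
    rcases hne with h1 | h1
    · rw [if_neg h1]
      simp
    · rw [if_neg h1]
      simp

end Aux9

/-- for two outgoing Rayleigh series `E^s` (α-quasi-periodic) and `W̃`
((-α)-quasi-periodic) with divergence-free coefficients, the Green integrand over the
period cell at height `h` integrates to zero. -/
theorem statement7 (k₀ : ℝ) (hk₀ : 0 < k₀) (α : ℝ × ℝ) (h : ℝ)
    (En Et : ℤ × ℤ → C3)
    (hEdivfree : ∀ n : ℤ × ℤ,
      cdot (toC3 (alphaN α n)) (En n) + betaN k₀ α n * En n 2 = 0)
    (hTdivfree : ∀ n : ℤ × ℤ,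
      cdot (toC3 (alphaN (-α) n)) (Et n) + betaN k₀ (-α) n * Et n 2 = 0)
    (h₀ : ℝ) (hh₀ : h₀ < h)
    (hEsum : Summable fun n : ℤ × ℤ =>
      (1 + enorm3 (alphaN α n)) * ‖En n‖ * Real.exp (-(betaN k₀ α n).im * h₀))
    (hTsum : Summable fun n : ℤ × ℤ =>
      (1 + enorm3 (alphaN (-α) n)) * ‖Et n‖ * Real.exp (-(betaN k₀ (-α) n).im * h₀)) :
    (∫ x' in cellSq,
        (cdot (cross (stdC 2) (curl3 (rayleighSeries k₀ α En) (pt3 x' h)))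
          (rayleighSeries k₀ (-α) Et (pt3 x' h)) -
        cdot (cross (stdC 2) (curl3 (rayleighSeries k₀ (-α) Et) (pt3 x' h)))
          (rayleighSeries k₀ α En (pt3 x' h))))
      = 0 := by
  have hk : (0:ℝ) ≤ k₀ := hk₀.le
  have hhE : Summable (wgt k₀ α En h₀) := hEsum
  have hhT : Summable (wgt k₀ (-α) Et h₀) := hTsum
  have key : ∀ x' : ℝ × ℝ,
      cdot (cross (stdC 2) (curl3 (rayleighSeries k₀ α En) (pt3 x' h)))
          (rayleighSeries k₀ (-α) Et (pt3 x' h)) -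
        cdot (cross (stdC 2) (curl3 (rayleighSeries k₀ (-α) Et) (pt3 x' h)))
          (rayleighSeries k₀ α En (pt3 x' h))
      = ∑' p : (ℤ × ℤ) × (ℤ × ℤ), termF k₀ α En Et h p x' :=
    fun x' => integrand_eq hk hhE hhT hh₀ x'
  rw [MeasureTheory.integral_congr_ae (ae_of_all _ key)]
  have hint : ∀ p : (ℤ × ℤ) × (ℤ × ℤ),
      Integrable (termF k₀ α En Et h p) (volume.restrict cellSq) :=
    integrable_termF k₀ α En Et h
  have hexp : ∀ (β : ℂ), 0 ≤ β.im →
      Real.exp (-β.im * h) ≤ Real.exp (-β.im * h₀) := by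
    intro β hβ
    apply Real.exp_le_exp.2
    nlinarith [hh₀.le]
  have hsumint : Summable fun p : (ℤ × ℤ) × (ℤ × ℤ) =>
      ∫ x' in cellSq, ‖termF k₀ α En Et h p x'‖ := by
    apply Summable.of_nonneg_of_le
      (f := fun p : (ℤ × ℤ) × (ℤ × ℤ) => (volume cellSq).toReal *
        (8 * (3 + k₀) * (wgt k₀ α En h₀ p.1 * wgt k₀ (-α) Et h₀ p.2)))
      (fun p => integral_nonneg fun x' => norm_nonneg _)
    · intro p
      rw [integral_norm_termF]
      apply mul_le_mul_of_nonneg_left ?_ ENNReal.toReal_nonneg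
      calc ‖Kco k₀ α En Et p.1 p.2‖ *
          (Real.exp (-(betaN k₀ α p.1).im * h) * Real.exp (-(betaN k₀ (-α) p.2).im * h))
          ≤ (8 * (3 + k₀) * ((1 + enorm3 (alphaN α p.1)) * ‖En p.1‖)
              * ((1 + enorm3 (alphaN (-α) p.2)) * ‖Et p.2‖)) *
            (Real.exp (-(betaN k₀ α p.1).im * h₀) * Real.exp (-(betaN k₀ (-α) p.2).im * h₀)) := by
            apply mul_le_mul (norm_Kco_le hk α En Et p.1 p.2)
            · exact mul_le_mul (hexp _ (betaN_im_nonneg _ _ _)) (hexp _ (betaN_im_nonneg _ _ _))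
                (Real.exp_pos _).le (Real.exp_pos _).le
            · positivity
            · have := enorm3_nonneg (alphaN α p.1)
              have := enorm3_nonneg (alphaN (-α) p.2)
              positivity
        _ = 8 * (3 + k₀) * (wgt k₀ α En h₀ p.1 * wgt k₀ (-α) Et h₀ p.2) := by
            rw [wgt, wgt]; ring
    · exact ((hhE.mul_of_nonneg hhT (fun n => wgt_nonneg k₀ α En h₀ n)
        (fun m => wgt_nonneg k₀ (-α) Et h₀ m)).mul_left (8 * (3 + k₀))).mul_left
        (volume cellSq).toReal
  rw [← MeasureTheory.integral_tsum_of_summable_integral_norm hint hsumint]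
  rw [tsum_congr (integral_termF_zero k₀ α En Et h hEdivfree hTdivfree)]
  exact tsum_zero
end
end

section
/- Assume β_n ≠ 0 for all n ∈ ℤ². Then for all x, y ∈ ℝ³ with x₃ ≠ y₃, the family n ↦ (1/(iβ_n)) exp( i α_n·(x−y) + i β_n |x₃ − y₃| ) is absolutely summable over ℤ² (so the free-space quasi-periodic Green's function G₀(x,y) = (1/8π²) Σ_{n∈ℤ²} (1/(iβ_n)) e^{i α_n·(x−y) + i β_n |x₃−y₃|} is well defined for x₃ ≠ y₃). -/
noncomputable section

open MeasureTheory Real Set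

lemma aux_exp_int {c : ℝ} (hc : 0 < c) :
    Summable fun n : ℤ => Real.exp (-(c * |(n : ℝ)|)) := by
  have key : Summable fun n : ℕ => Real.exp (-(c * n)) := by
    have : ∀ n : ℕ, Real.exp (-(c * n)) = (Real.exp (-c)) ^ n := by
      intro n; rw [← Real.exp_nat_mul]; ring_nf
    simp_rw [this]
    exact summable_geometric_of_lt_one (Real.exp_nonneg _)
      (Real.exp_lt_one_iff.mpr (by linarith))
  apply Summable.of_nat_of_neg <;> · simpa using key

set_option maxHeartbeats 1000000 in
/-- absolute summability of the mode series of the free-space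
quasi-periodic Green's function for `x₃ ≠ y₃`. -/
theorem statement9 (k₀ : ℝ) (hk₀ : 0 < k₀) (α : ℝ × ℝ)
    (hβ : ∀ n : ℤ × ℤ, betaN k₀ α n ≠ 0) (x y : V3) (hxy : x 2 ≠ y 2) :
    Summable fun n : ℤ × ℤ =>
      ‖(1 / (Complex.I * betaN k₀ α n)) *
        Complex.exp (Complex.I * ((rdot (alphaN α n) (x - y) : ℝ) : ℂ) +
          Complex.I * betaN k₀ α n * ((|x 2 - y 2| : ℝ) : ℂ))‖ := by
  set d : ℝ := |x 2 - y 2| with hd_def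
  have hd : 0 < d := abs_pos.mpr (sub_ne_zero.mpr hxy)
  set c : ℝ := d / 2 with hc_def
  have hc : 0 < c := by positivity
  set C : ℝ := Real.exp (d * k₀) * (Real.exp (c * |α.1|) * Real.exp (c * |α.2|)) with hC
  have hg : Summable fun n : ℤ × ℤ =>
      C * (Real.exp (-(c * |(n.1 : ℝ)|)) * Real.exp (-(c * |(n.2 : ℝ)|))) := by
    refine Summable.mul_left C ?_
    exact Summable.mul_of_nonneg (aux_exp_int hc) (aux_exp_int hc)
      (fun _ => Real.exp_nonneg _) (fun _ => Real.exp_nonneg _)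
  refine hg.of_norm_bounded_eventually ?_
  rw [Filter.eventually_cofinite]
  have hbox : {n : ℤ × ℤ | ¬ ‖‖(1 / (Complex.I * betaN k₀ α n)) *
        Complex.exp (Complex.I * ((rdot (alphaN α n) (x - y) : ℝ) : ℂ) +
          Complex.I * betaN k₀ α n * ((d : ℝ) : ℂ))‖‖ ≤
      C * (Real.exp (-(c * |(n.1 : ℝ)|)) * Real.exp (-(c * |(n.2 : ℝ)|)))} ⊆
      {n : ℤ × ℤ | (α.1 + n.1) ^ 2 + (α.2 + n.2) ^ 2 ≤ (k₀ + 2) ^ 2} := by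
    intro n hn
    simp only [mem_setOf_eq] at hn ⊢
    by_contra ht
    push_neg at ht
    apply hn
    set a : ℝ := α.1 + n.1 with ha_def
    set b : ℝ := α.2 + n.2 with hb_def
    have htk : ¬ (a ^ 2 + b ^ 2 ≤ k₀ ^ 2) := by nlinarith
    set s : ℝ := Real.sqrt (a ^ 2 + b ^ 2 - k₀ ^ 2) with hs_def
    have hs_sq : s ^ 2 = a ^ 2 + b ^ 2 - k₀ ^ 2 := Real.sq_sqrt (by nlinarith)
    have hs_nonneg : 0 ≤ s := Real.sqrt_nonneg _
    have hs2 : 2 ≤ s := by nlinarith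
    have hβn : betaN k₀ α n = Complex.I * (s : ℂ) := by
      rw [betaN, if_neg htk]
    have hnorm : ‖(1 / (Complex.I * betaN k₀ α n)) *
        Complex.exp (Complex.I * ((rdot (alphaN α n) (x - y) : ℝ) : ℂ) +
          Complex.I * betaN k₀ α n * ((d : ℝ) : ℂ))‖ = s⁻¹ * Real.exp (-(s * d)) := by
    
      rw [hβn, norm_mul]
      congr 1
      · rw [show Complex.I * (Complex.I * (s : ℂ)) = -(s : ℂ) by
          rw [← mul_assoc, Complex.I_mul_I]; ring]
        simp [abs_of_nonneg hs_nonneg]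
      · rw [Complex.norm_exp]
        congr 1
        simp [Complex.add_re, Complex.mul_re, Complex.I_re, Complex.I_im,
          Complex.ofReal_re, Complex.ofReal_im]
    rw [Real.norm_of_nonneg (norm_nonneg _), hnorm]
    have h1 : Real.sqrt (a ^ 2 + b ^ 2) ≤ s + k₀ := by
      rw [show s + k₀ = Real.sqrt ((s + k₀) ^ 2) from
        (Real.sqrt_sq (by positivity)).symm]
      apply Real.sqrt_le_sqrt
      nlinarith
    have hA : |a| ≤ Real.sqrt (a ^ 2 + b ^ 2) := by
      rw [show |a| = Real.sqrt (a ^ 2) from (Real.sqrt_sq_eq_abs a).symm]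
      exact Real.sqrt_le_sqrt (by nlinarith [sq_nonneg b])
    have hB : |b| ≤ Real.sqrt (a ^ 2 + b ^ 2) := by
      rw [show |b| = Real.sqrt (b ^ 2) from (Real.sqrt_sq_eq_abs b).symm]
      exact Real.sqrt_le_sqrt (by nlinarith [sq_nonneg a])
    have h2 : (|a| + |b|) / 2 ≤ Real.sqrt (a ^ 2 + b ^ 2) := by linarith
    have hs_lb : (|a| + |b|) / 2 - k₀ ≤ s := by linarith
    have hinv : s⁻¹ ≤ 1 := by
      rw [inv_le_one_iff₀]; right; linarith
    calc s⁻¹ * Real.exp (-(s * d)) ≤ 1 * Real.exp (-(s * d)) :=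
          mul_le_mul_of_nonneg_right hinv (Real.exp_nonneg _)
      _ = Real.exp (-(s * d)) := one_mul _
      _ ≤ C * (Real.exp (-(c * |(n.1 : ℝ)|)) * Real.exp (-(c * |(n.2 : ℝ)|))) := by
          rw [hC]
          simp only [← Real.exp_add]
          apply Real.exp_le_exp.mpr
          have ha : |(n.1 : ℝ)| ≤ |a| + |α.1| := by
            have e : (n.1 : ℝ) = a - α.1 := by rw [ha_def]; ring
            rw [e, sub_eq_add_neg]
            exact (abs_add_le _ _).trans (by rw [abs_neg])
          have hb : |(n.2 : ℝ)| ≤ |b| + |α.2| := by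
            have e : (n.2 : ℝ) = b - α.2 := by rw [hb_def]; ring
            rw [e, sub_eq_add_neg]
            exact (abs_add_le _ _).trans (by rw [abs_neg])
          have h3 : c * |(n.1 : ℝ)| ≤ c * (|a| + |α.1|) :=
            mul_le_mul_of_nonneg_left ha hc.le
          have h4 : c * |(n.2 : ℝ)| ≤ c * (|b| + |α.2|) :=
            mul_le_mul_of_nonneg_left hb hc.le
          have h5 : ((|a| + |b|) / 2 - k₀) * d ≤ s * d :=
            mul_le_mul_of_nonneg_right hs_lb hd.le
          rw [hc_def] at h3 h4 ⊢
          nlinarith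
  refine Set.Finite.subset ?_ hbox
  set M : ℤ := ⌈k₀ + 2 + |α.1| + |α.2|⌉ with hM
  apply Set.Finite.subset (Set.finite_Icc ((-M, -M) : ℤ × ℤ) (M, M))
  intro n hn
  simp only [mem_setOf_eq] at hn
  have hMR : k₀ + 2 + |α.1| + |α.2| ≤ (M : ℝ) := Int.le_ceil _
  have key : ∀ v w : ℝ, v ^ 2 + w ^ 2 ≤ (k₀ + 2) ^ 2 → |v| ≤ k₀ + 2 := by
    intro v w h
    nlinarith [sq_abs v, abs_nonneg v, sq_nonneg w]
  have h1 : |(n.1 : ℝ)| ≤ (M : ℝ) := by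
    have := key _ _ hn
    have e : (n.1 : ℝ) = (α.1 + n.1) - α.1 := by ring
    rw [e]
    calc |(α.1 + n.1 : ℝ) - α.1| ≤ |(α.1 + n.1 : ℝ)| + |α.1| := by
          rw [sub_eq_add_neg]; exact (abs_add_le _ _).trans (by rw [abs_neg])
      _ ≤ (M : ℝ) := by linarith [abs_nonneg α.2]
  have h2 : |(n.2 : ℝ)| ≤ (M : ℝ) := by
    have hn' : (α.2 + n.2) ^ 2 + (α.1 + n.1) ^ 2 ≤ (k₀ + 2) ^ 2 := by linarith
    have := key _ _ hn'
    have e : (n.2 : ℝ) = (α.2 + n.2) - α.2 := by ring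
    rw [e]
    calc |(α.2 + n.2 : ℝ) - α.2| ≤ |(α.2 + n.2 : ℝ)| + |α.2| := by
          rw [sub_eq_add_neg]; exact (abs_add_le _ _).trans (by rw [abs_neg])
      _ ≤ (M : ℝ) := by linarith [abs_nonneg α.1]
  have h1' : |n.1| ≤ M := by exact_mod_cast (by push_cast; exact h1 : ((|n.1| : ℤ) : ℝ) ≤ (M : ℝ))
  have h2' : |n.2| ≤ M := by exact_mod_cast (by push_cast; exact h2 : ((|n.2| : ℤ) : ℝ) ≤ (M : ℝ))
  rw [Set.mem_Icc]
  rw [abs_le] at h1' h2'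
  exact ⟨⟨h1'.1, h2'.1⟩, ⟨h1'.2, h2'.2⟩⟩
end
end

section
/- Let b > c, Q = (0,2π)² × (c,b), and let q : {c ≤ x₃ ≤ b} → ℂ and F : {c ≤ x₃ ≤ b} → ℂ³ be continuous. Suppose E and E₂ are C² vector fields with values in ℂ³ on the closed slab {c ≤ x₃ ≤ b}, both α-quasi-periodic, such that curl curl E − k₀² q E = F and curl curl E₂ − k₀² q̄ E₂ = 0 on the open slab (q̄ the complex conjugate of q), and such that on the top face {x₃ = b}: e₃ × E = 0 and e₃ × curl E = 0, while on the bottom face {x₃ = c}: e₃ × E = 0 and e₃ × E₂ = 0. Then ∫_Q F(x) · conj(E₂(x)) dx = 0, where conj denotes componentwise complex conjugation. (This is the orthogonality relation derived by Green's vector formula in the proof of the uniqueness theorem for the refractive index.) -/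
noncomputable section

open MeasureTheory Real Set

/-- The closed slab `{c ≤ x₃ ≤ b}`. -/
def slab (c b : ℝ) : Set V3 := {x : V3 | c ≤ x 2 ∧ x 2 ≤ b}

/-- One period cell `Q = (0,2π)² × (c,b)` of the slab. -/
def slabCell (c b : ℝ) : Set V3 :=
  {x : V3 | x 0 ∈ Set.Ioo 0 (2 * π) ∧ x 1 ∈ Set.Ioo 0 (2 * π) ∧ x 2 ∈ Set.Ioo c b}

/-! ### Auxiliary lemmas -/

lemma pd_sub {f g : V3 → ℂ} {x : V3} (j : Fin 3) (hf : DifferentiableAt ℝ f x)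
    (hg : DifferentiableAt ℝ g x) :
    pd j (fun y => f y - g y) x = pd j f x - pd j g x := by
  unfold pd
  rw [fderiv_fun_sub hf hg]; simp

lemma pd_mul {f g : V3 → ℂ} {x : V3} (j : Fin 3) (hf : DifferentiableAt ℝ f x)
    (hg : DifferentiableAt ℝ g x) :
    pd j (fun y => f y * g y) x = pd j f x * g x + f x * pd j g x := by
  unfold pd
  rw [fderiv_fun_mul hf hg]
  simp [smul_eq_mul]; ring

lemma pd_const_mul {f : V3 → ℂ} {x : V3} (j : Fin 3) (c : ℂ) (hf : DifferentiableAt ℝ f x) :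
    pd j (fun y => c * f y) x = c * pd j f x := by
  unfold pd
  rw [fderiv_const_mul hf c]; simp

lemma pd_congr {f g : V3 → ℂ} {x : V3} (j : Fin 3) (h : f =ᶠ[nhds x] g) :
    pd j f x = pd j g x := by
  unfold pd; rw [h.fderiv_eq]

lemma pd_shift {f : V3 → ℂ} {x v : V3} (j : Fin 3) (hf : DifferentiableAt ℝ f (x + v)) :
    pd j (fun y => f (y + v)) x = pd j f (x + v) := by
  unfold pd
  have h1 : HasFDerivAt (fun y : V3 => y + v) (ContinuousLinearMap.id ℝ V3) x :=
    (hasFDerivAt_id x).add_const v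
  have h2 : HasFDerivAt (fun y => f (y + v)) ((fderiv ℝ f (x + v)).comp (ContinuousLinearMap.id ℝ V3)) x :=
    hf.hasFDerivAt.comp x h1
  rw [h2.fderiv]
  simp

lemma pd_conj {f : V3 → ℂ} {x : V3} (j : Fin 3) (hf : DifferentiableAt ℝ f x) :
    pd j (fun y => (starRingEnd ℂ) (f y)) x = (starRingEnd ℂ) (pd j f x) := by
  unfold pd
  have h : HasFDerivAt (fun y => (starRingEnd ℂ) (f y))
      ((Complex.conjCLE.toContinuousLinearMap).comp (fderiv ℝ f x)) x :=
    (Complex.conjCLE.toContinuousLinearMap.hasFDerivAt (x := f x)).comp x hf.hasFDerivAt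
  rw [h.fderiv]
  simp

section reg
variable {u : V3 → C3} {U : Set V3} {x : V3}

lemma cd_comp (hU : IsOpen U) (hu : ContDiffOn ℝ 2 u U) (hx : x ∈ U) (i : Fin 3) :
    ContDiffAt ℝ 2 (fun y => u y i) x := by
  have := hu.contDiffAt (hU.mem_nhds hx)
  exact (contDiffAt_pi.1 this) i

lemma diff_comp (hU : IsOpen U) (hu : ContDiffOn ℝ 2 u U) (hx : x ∈ U) (i : Fin 3) :
    DifferentiableAt ℝ (fun y => u y i) x :=
  (cd_comp hU hu hx i).differentiableAt (by norm_num)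

lemma cd_pd (hU : IsOpen U) (hu : ContDiffOn ℝ 2 u U) (hx : x ∈ U) (j : Fin 3) (i : Fin 3) :
    ContDiffAt ℝ 1 (fun y => pd j (fun z => u z i) y) x := by
  have h1 : ContDiffAt ℝ 1 (fderiv ℝ (fun y => u y i)) x :=
    (cd_comp hU hu hx i).fderiv_right (by norm_num)
  exact (ContinuousLinearMap.apply ℝ ℂ (stdR j)).contDiff.contDiffAt.comp x h1

lemma diff_pd (hU : IsOpen U) (hu : ContDiffOn ℝ 2 u U) (hx : x ∈ U) (j : Fin 3) (i : Fin 3) :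
    DifferentiableAt ℝ (fun y => pd j (fun z => u z i) y) x :=
  (cd_pd hU hu hx j i).differentiableAt one_ne_zero

lemma diff_curl_comp (hU : IsOpen U) (hu : ContDiffOn ℝ 2 u U) (hx : x ∈ U) (i : Fin 3) :
    DifferentiableAt ℝ (fun y => curl3 u y i) x := by
  fin_cases i
  · exact ((diff_pd hU hu hx 1 2).sub (diff_pd hU hu hx 2 1) :)
  · exact ((diff_pd hU hu hx 2 0).sub (diff_pd hU hu hx 0 2) :)
  · exact ((diff_pd hU hu hx 0 1).sub (diff_pd hU hu hx 1 0) :)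

lemma cont_pd (hU : IsOpen U) (hu : ContDiffOn ℝ 2 u U) (j : Fin 3) (i : Fin 3) :
    ContinuousOn (fun y => pd j (fun z => u z i) y) U := by
  have h0 : ContDiffOn ℝ 2 (fun y => u y i) U := fun y hy => (cd_comp hU hu hy i).contDiffWithinAt
  have h1 : ContinuousOn (fderiv ℝ (fun y => u y i)) U :=
    h0.continuousOn_fderiv_of_isOpen hU (by norm_num)
  exact ((ContinuousLinearMap.apply ℝ ℂ (stdR j)).continuous.comp_continuousOn h1)

lemma cont_comp (hu : ContDiffOn ℝ 2 u U) (i : Fin 3) : ContinuousOn (fun y => u y i) U :=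
  (continuousOn_pi.1 (hu.continuousOn)) i

lemma cont_curl_comp (hU : IsOpen U) (hu : ContDiffOn ℝ 2 u U) (i : Fin 3) :
    ContinuousOn (fun y => curl3 u y i) U := by
  fin_cases i
  · exact ((cont_pd hU hu 1 2).sub (cont_pd hU hu 2 1) :)
  · exact ((cont_pd hU hu 2 0).sub (cont_pd hU hu 0 2) :)
  · exact ((cont_pd hU hu 0 1).sub (cont_pd hU hu 1 0) :)

end reg

lemma diff_cross_comp {u v : V3 → C3} {x : V3}
    (hu : ∀ i, DifferentiableAt ℝ (fun y => u y i) x)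
    (hv : ∀ i, DifferentiableAt ℝ (fun y => v y i) x) (i : Fin 3) :
    DifferentiableAt ℝ (fun y => cross (u y) (v y) i) x := by
  fin_cases i
  · exact (((hu 1).mul (hv 2)).sub ((hu 2).mul (hv 1)) :)
  · exact (((hu 2).mul (hv 0)).sub ((hu 0).mul (hv 2)) :)
  · exact (((hu 0).mul (hv 1)).sub ((hu 1).mul (hv 0)) :)

lemma cont_cross_comp {u v : V3 → C3} {S : Set V3}
    (hu : ∀ i, ContinuousOn (fun y => u y i) S)
    (hv : ∀ i, ContinuousOn (fun y => v y i) S) (i : Fin 3) :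
    ContinuousOn (fun y => cross (u y) (v y) i) S := by
  fin_cases i
  · exact (((hu 1).mul (hv 2)).sub ((hu 2).mul (hv 1)) :)
  · exact (((hu 2).mul (hv 0)).sub ((hu 0).mul (hv 2)) :)
  · exact (((hu 0).mul (hv 1)).sub ((hu 1).mul (hv 0)) :)

lemma div3_sub {P Q : V3 → C3} {x : V3}
    (hP : ∀ i, DifferentiableAt ℝ (fun y => P y i) x)
    (hQ : ∀ i, DifferentiableAt ℝ (fun y => Q y i) x) :
    div3 (fun y => P y - Q y) x = div3 P x - div3 Q x := by
  have e : ∀ i : Fin 3, (fun y => (P y - Q y) i) = fun y => P y i - Q y i := fun i => rfl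
  show pd 0 (fun y => (P y - Q y) 0) x + pd 1 (fun y => (P y - Q y) 1) x
      + pd 2 (fun y => (P y - Q y) 2) x = _
  rw [e 0, e 1, e 2, pd_sub 0 (hP 0) (hQ 0), pd_sub 1 (hP 1) (hQ 1), pd_sub 2 (hP 2) (hQ 2)]
  show _ = (pd 0 (fun y => P y 0) x + pd 1 (fun y => P y 1) x + pd 2 (fun y => P y 2) x)
      - (pd 0 (fun y => Q y 0) x + pd 1 (fun y => Q y 1) x + pd 2 (fun y => Q y 2) x)
  ring

lemma div3_cross {u v : V3 → C3} {x : V3}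
    (hu : ∀ i, DifferentiableAt ℝ (fun y => u y i) x)
    (hv : ∀ i, DifferentiableAt ℝ (fun y => v y i) x) :
    div3 (fun y => cross (u y) (v y)) x = cdot (curl3 u x) (v x) - cdot (u x) (curl3 v x) := by
  have h0 : pd 0 (fun y => cross (u y) (v y) 0) x
      = pd 0 (fun y => u y 1) x * v x 2 + u x 1 * pd 0 (fun y => v y 2) x
        - (pd 0 (fun y => u y 2) x * v x 1 + u x 2 * pd 0 (fun y => v y 1) x) := by
    rw [show (fun y => cross (u y) (v y) 0)
        = fun y => u y 1 * v y 2 - u y 2 * v y 1 from rfl,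
      pd_sub (f := fun y => u y 1 * v y 2) (g := fun y => u y 2 * v y 1) 0 ((hu 1).mul (hv 2)) ((hu 2).mul (hv 1)),
      pd_mul 0 (hu 1) (hv 2), pd_mul 0 (hu 2) (hv 1)]
  have h1 : pd 1 (fun y => cross (u y) (v y) 1) x
      = pd 1 (fun y => u y 2) x * v x 0 + u x 2 * pd 1 (fun y => v y 0) x
        - (pd 1 (fun y => u y 0) x * v x 2 + u x 0 * pd 1 (fun y => v y 2) x) := by
    rw [show (fun y => cross (u y) (v y) 1)
        = fun y => u y 2 * v y 0 - u y 0 * v y 2 from rfl,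
      pd_sub (f := fun y => u y 2 * v y 0) (g := fun y => u y 0 * v y 2) 1 ((hu 2).mul (hv 0)) ((hu 0).mul (hv 2)),
      pd_mul 1 (hu 2) (hv 0), pd_mul 1 (hu 0) (hv 2)]
  have h2 : pd 2 (fun y => cross (u y) (v y) 2) x
      = pd 2 (fun y => u y 0) x * v x 1 + u x 0 * pd 2 (fun y => v y 1) x
        - (pd 2 (fun y => u y 1) x * v x 0 + u x 1 * pd 2 (fun y => v y 0) x) := by
    rw [show (fun y => cross (u y) (v y) 2)
        = fun y => u y 0 * v y 1 - u y 1 * v y 0 from rfl,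
      pd_sub (f := fun y => u y 0 * v y 1) (g := fun y => u y 1 * v y 0) 2 ((hu 0).mul (hv 1)) ((hu 1).mul (hv 0)),
      pd_mul 2 (hu 0) (hv 1), pd_mul 2 (hu 1) (hv 0)]
  show pd 0 (fun y => cross (u y) (v y) 0) x + pd 1 (fun y => cross (u y) (v y) 1) x
      + pd 2 (fun y => cross (u y) (v y) 2) x = _
  rw [h0, h1, h2]
  show _ = ((pd 1 (fun y => u y 2) x - pd 2 (fun y => u y 1) x) * v x 0
      + (pd 2 (fun y => u y 0) x - pd 0 (fun y => u y 2) x) * v x 1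
      + (pd 0 (fun y => u y 1) x - pd 1 (fun y => u y 0) x) * v x 2)
      - (u x 0 * (pd 1 (fun y => v y 2) x - pd 2 (fun y => v y 1) x)
      + u x 1 * (pd 2 (fun y => v y 0) x - pd 0 (fun y => v y 2) x)
      + u x 2 * (pd 0 (fun y => v y 1) x - pd 1 (fun y => v y 0) x))
  ring

lemma isOpen_openSlab {c b : ℝ} : IsOpen {y : V3 | c < y 2 ∧ y 2 < b} := by
  have : {y : V3 | c < y 2 ∧ y 2 < b} = (fun y : V3 => y 2) ⁻¹' Set.Ioo c b := rfl
  rw [this]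
  exact isOpen_Ioo.preimage (continuous_apply 2)

lemma pd_qp {f : V3 → ℂ} {c b : ℝ} {v : V3} {μ : ℂ}
    (hqp : ∀ y : V3, c < y 2 → y 2 < b → f (y + v) = μ * f y)
    {x : V3} (hx1 : c < x 2) (hx2 : x 2 < b)
    (hfx : DifferentiableAt ℝ f x) (hfxv : DifferentiableAt ℝ f (x + v)) (j : Fin 3) :
    pd j f (x + v) = μ * pd j f x := by
  have hmem : x ∈ {y : V3 | c < y 2 ∧ y 2 < b} := ⟨hx1, hx2⟩
  have hev : (fun y => f (y + v)) =ᶠ[nhds x] fun y => μ * f y := by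
    filter_upwards [isOpen_openSlab.mem_nhds hmem] with y hy using hqp y hy.1 hy.2
  rw [← pd_shift j hfxv, pd_congr j hev, pd_const_mul j μ hfx]

lemma curl3_qp {u : V3 → C3} {c b : ℝ} {v : V3} {μ : ℂ}
    (hqp : ∀ y : V3, c < y 2 → y 2 < b → u (y + v) = μ • u y)
    {x : V3} (hx1 : c < x 2) (hx2 : x 2 < b)
    (hd : ∀ i, DifferentiableAt ℝ (fun y => u y i) x)
    (hdv : ∀ i, DifferentiableAt ℝ (fun y => u y i) (x + v)) (i : Fin 3) :
    curl3 u (x + v) i = μ * curl3 u x i := by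
  have hq : ∀ (k : Fin 3) (y : V3), c < y 2 → y 2 < b → u (y + v) k = μ * u y k := by
    intro k y h1 h2
    have := congrFun (hqp y h1 h2) k
    simpa using this
  fin_cases i
  · show pd 1 (fun y => u y 2) (x + v) - pd 2 (fun y => u y 1) (x + v)
      = μ * (pd 1 (fun y => u y 2) x - pd 2 (fun y => u y 1) x)
    rw [pd_qp (hq 2) hx1 hx2 (hd 2) (hdv 2), pd_qp (hq 1) hx1 hx2 (hd 1) (hdv 1)]; ring
  · show pd 2 (fun y => u y 0) (x + v) - pd 0 (fun y => u y 2) (x + v)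
      = μ * (pd 2 (fun y => u y 0) x - pd 0 (fun y => u y 2) x)
    rw [pd_qp (hq 0) hx1 hx2 (hd 0) (hdv 0), pd_qp (hq 2) hx1 hx2 (hd 2) (hdv 2)]; ring
  · show pd 0 (fun y => u y 1) (x + v) - pd 1 (fun y => u y 0) (x + v)
      = μ * (pd 0 (fun y => u y 1) x - pd 1 (fun y => u y 0) x)
    rw [pd_qp (hq 1) hx1 hx2 (hd 1) (hdv 1), pd_qp (hq 0) hx1 hx2 (hd 0) (hdv 0)]; ring

/-- Componentwise complex conjugation of a field. -/
def conjF (u : V3 → C3) : V3 → C3 := fun y k => (starRingEnd ℂ) (u y k)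

lemma conjF_contDiffOn {u : V3 → C3} {U : Set V3} (hu : ContDiffOn ℝ 2 u U) :
    ContDiffOn ℝ 2 (conjF u) U := by
  have hL : ContDiff ℝ 2 (fun z : C3 => (fun k => (starRingEnd ℂ) (z k) : C3)) := by
    apply contDiff_pi.2
    intro k
    exact Complex.conjCLE.toContinuousLinearMap.contDiff.comp (contDiff_apply ℝ ℂ k)
  exact hL.comp_contDiffOn hu

lemma curl3_conj {u : V3 → C3} {x : V3}
    (hd : ∀ i, DifferentiableAt ℝ (fun y => u y i) x) (i : Fin 3) :
    curl3 (conjF u) x i = (starRingEnd ℂ) (curl3 u x i) := by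
  fin_cases i
  · show pd 1 (fun y => (starRingEnd ℂ) (u y 2)) x - pd 2 (fun y => (starRingEnd ℂ) (u y 1)) x
      = (starRingEnd ℂ) (pd 1 (fun y => u y 2) x - pd 2 (fun y => u y 1) x)
    rw [pd_conj 1 (hd 2), pd_conj 2 (hd 1), map_sub]
  · show pd 2 (fun y => (starRingEnd ℂ) (u y 0)) x - pd 0 (fun y => (starRingEnd ℂ) (u y 2)) x
      = (starRingEnd ℂ) (pd 2 (fun y => u y 0) x - pd 0 (fun y => u y 2) x)
    rw [pd_conj 2 (hd 0), pd_conj 0 (hd 2), map_sub]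
  · show pd 0 (fun y => (starRingEnd ℂ) (u y 1)) x - pd 1 (fun y => (starRingEnd ℂ) (u y 0)) x
      = (starRingEnd ℂ) (pd 0 (fun y => u y 1) x - pd 1 (fun y => u y 0) x)
    rw [pd_conj 0 (hd 1), pd_conj 1 (hd 0), map_sub]

lemma curl3_congr {u w : V3 → C3} {x : V3} (h : u =ᶠ[nhds x] w) (i : Fin 3) :
    curl3 u x i = curl3 w x i := by
  have hc : ∀ k : Fin 3, (fun y => u y k) =ᶠ[nhds x] (fun y => w y k) :=
    fun k => h.mono fun y hy => congrFun hy k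
  fin_cases i
  · show pd 1 (fun y => u y 2) x - pd 2 (fun y => u y 1) x
      = pd 1 (fun y => w y 2) x - pd 2 (fun y => w y 1) x
    rw [pd_congr 1 (hc 2), pd_congr 2 (hc 1)]
  · show pd 2 (fun y => u y 0) x - pd 0 (fun y => u y 2) x
      = pd 2 (fun y => w y 0) x - pd 0 (fun y => w y 2) x
    rw [pd_congr 2 (hc 0), pd_congr 0 (hc 2)]
  · show pd 0 (fun y => u y 1) x - pd 1 (fun y => u y 0) x
      = pd 0 (fun y => w y 1) x - pd 1 (fun y => w y 0) x
    rw [pd_congr 0 (hc 1), pd_congr 1 (hc 0)]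

/-- the orthogonality relation derived by Green's vector formula in the
proof of the uniqueness theorem for the refractive index:
`∫_Q F · conj E₂ dx = 0`. -/

theorem statement12 (k₀ : ℝ) (hk₀ : 0 < k₀) (α : ℝ × ℝ) (b c : ℝ) (hcb : c < b)
    (q : V3 → ℂ) (hq : ContinuousOn q (slab c b))
    (F : V3 → C3) (hF : ContinuousOn F (slab c b))
    (E E₂ : V3 → C3)
    (hEreg : ∃ U : Set V3, IsOpen U ∧ slab c b ⊆ U ∧ ContDiffOn ℝ 2 E U)
    (hE₂reg : ∃ U : Set V3, IsOpen U ∧ slab c b ⊆ U ∧ ContDiffOn ℝ 2 E₂ U)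
    (hEqp : QPOn α (slab c b) E) (hE₂qp : QPOn α (slab c b) E₂)
    (hEeq : ∀ x : V3, c < x 2 → x 2 < b →
      curl3 (curl3 E) x - ((k₀ ^ 2 : ℂ) * q x) • E x = F x)
    (hE₂eq : ∀ x : V3, c < x 2 → x 2 < b →
      curl3 (curl3 E₂) x - ((k₀ ^ 2 : ℂ) * (starRingEnd ℂ) (q x)) • E₂ x = 0)
    (htop : ∀ x : V3, x 2 = b → cross (stdC 2) (E x) = 0)
    (htopc : ∀ x : V3, x 2 = b → cross (stdC 2) (curl3 E x) = 0)
    (hbot : ∀ x : V3, x 2 = c → cross (stdC 2) (E x) = 0)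
    (hbot₂ : ∀ x : V3, x 2 = c → cross (stdC 2) (E₂ x) = 0) :
    (∫ x in slabCell c b, cdot (F x) (fun i => (starRingEnd ℂ) (E₂ x i))) = 0 := by
  obtain ⟨U₁, hU₁o, hU₁s, hEc⟩ := hEreg
  obtain ⟨U₂, hU₂o, hU₂s, hE₂c⟩ := hE₂reg
  have hGc : ContDiffOn ℝ 2 (conjF E₂) U₂ := conjF_contDiffOn hE₂c
  set O : Set V3 := {y : V3 | c < y 2 ∧ y 2 < b} with hOdef
  have hOslab : O ⊆ slab c b := fun y hy => ⟨hy.1.le, hy.2.le⟩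
  have hOU₁ : O ⊆ U₁ := fun y hy => hU₁s (hOslab hy)
  have hOU₂ : O ⊆ U₂ := fun y hy => hU₂s (hOslab hy)
  set W : V3 → C3 :=
    fun y => cross (E y) (curl3 (conjF E₂) y) - cross (conjF E₂ y) (curl3 E y) with hWdef
  -- differentiability packs
  have hdE : ∀ x ∈ O, ∀ i, DifferentiableAt ℝ (fun y => E y i) x :=
    fun x hx i => diff_comp hU₁o hEc (hOU₁ hx) i
  have hdG : ∀ x ∈ O, ∀ i, DifferentiableAt ℝ (fun y => conjF E₂ y i) x :=
    fun x hx i => diff_comp hU₂o hGc (hOU₂ hx) i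
  have hdE₂ : ∀ x ∈ O, ∀ i, DifferentiableAt ℝ (fun y => E₂ y i) x :=
    fun x hx i => diff_comp hU₂o hE₂c (hOU₂ hx) i
  have hdA : ∀ x ∈ O, ∀ i, DifferentiableAt ℝ (fun y => curl3 E y i) x :=
    fun x hx i => diff_curl_comp hU₁o hEc (hOU₁ hx) i
  have hdB : ∀ x ∈ O, ∀ i, DifferentiableAt ℝ (fun y => curl3 (conjF E₂) y i) x :=
    fun x hx i => diff_curl_comp hU₂o hGc (hOU₂ hx) i
  have hdWc : ∀ x ∈ O, ∀ i, DifferentiableAt ℝ (fun y => W y i) x := by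
    intro x hx i
    exact ((diff_cross_comp (hdE x hx) (hdB x hx) i).sub
      (diff_cross_comp (hdG x hx) (hdA x hx) i) :)
  have hdW : ∀ x ∈ O, DifferentiableAt ℝ W x := fun x hx => differentiableAt_pi.2 (hdWc x hx)
  -- pointwise divergence identity
  have hdiv : ∀ x ∈ O, div3 W x = cdot (F x) (conjF E₂ x) := by
    intro x hx
    have h1 : div3 W x = div3 (fun y => cross (E y) (curl3 (conjF E₂) y)) x
        - div3 (fun y => cross (conjF E₂ y) (curl3 E y)) x :=
      div3_sub (diff_cross_comp (hdE x hx) (hdB x hx)) (diff_cross_comp (hdG x hx) (hdA x hx))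
    have h2 := div3_cross (hdE x hx) (hdB x hx)
    have h3 := div3_cross (hdG x hx) (hdA x hx)
    have hccE : ∀ i, curl3 (curl3 E) x i = F x i + ((k₀ ^ 2 : ℂ) * q x) * E x i := by
      intro i
      have h := congrFun (hEeq x hx.1 hx.2) i
      simp only [Pi.sub_apply, Pi.smul_apply, smul_eq_mul] at h
      linear_combination h
    have hccG : ∀ i, curl3 (curl3 (conjF E₂)) x i = ((k₀ ^ 2 : ℂ) * q x) * conjF E₂ x i := by
      intro i
      have hev : curl3 (conjF E₂) =ᶠ[nhds x] conjF (curl3 E₂) := by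
        filter_upwards [isOpen_openSlab.mem_nhds hx] with y hy
        exact funext fun k => curl3_conj (hdE₂ y hy) k
      have hstep1 : curl3 (curl3 (conjF E₂)) x i = curl3 (conjF (curl3 E₂)) x i :=
        curl3_congr hev i
      have hstep2 : curl3 (conjF (curl3 E₂)) x i = (starRingEnd ℂ) (curl3 (curl3 E₂) x i) :=
        curl3_conj (fun k => diff_curl_comp hU₂o hE₂c (hOU₂ hx) k) i
      have heq : curl3 (curl3 E₂) x i = ((k₀ ^ 2 : ℂ) * (starRingEnd ℂ) (q x)) * E₂ x i := by
        have h := congrFun (hE₂eq x hx.1 hx.2) i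
        simp only [Pi.sub_apply, Pi.smul_apply, smul_eq_mul, Pi.zero_apply] at h
        linear_combination h
      rw [hstep1, hstep2, heq]
      simp only [conjF, map_mul, map_pow, Complex.conj_ofReal, Complex.conj_conj]
    rw [h1, h2, h3]
    have e0 := hccE 0; have e1 := hccE 1; have e2 := hccE 2
    have g0 := hccG 0; have g1 := hccG 1; have g2 := hccG 2
    simp only [cdot]
    rw [e0, e1, e2, g0, g1, g2]
    ring
  -- the box
  set lo : V3 := ![0, 0, c] with hlodef
  set hi : V3 := ![2 * π, 2 * π, b] with hhidef
  have hle : lo ≤ hi := by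
    intro i
    fin_cases i
    · show (0:ℝ) ≤ 2 * π
      positivity
    · show (0:ℝ) ≤ 2 * π
      positivity
    · exact hcb.le
  have hIccSlab : Set.Icc lo hi ⊆ slab c b := by
    intro x hx
    exact ⟨hx.1 2, hx.2 2⟩
  have hpiO : (Set.pi Set.univ fun i => Set.Ioo (lo i) (hi i)) ⊆ O := by
    intro x hx
    exact ⟨(hx 2 trivial).1, (hx 2 trivial).2⟩
  -- continuity of W on the closed box
  have hWcont : ContinuousOn W (Set.Icc lo hi) := by
    have hsub : Set.Icc lo hi ⊆ U₁ ∩ U₂ :=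
      fun x hx => ⟨hU₁s (hIccSlab hx), hU₂s (hIccSlab hx)⟩
    have h12 : ContinuousOn W (U₁ ∩ U₂) := by
      apply continuousOn_pi.2
      intro i
      have h1 : ContinuousOn (fun y => cross (E y) (curl3 (conjF E₂) y) i) (U₁ ∩ U₂) :=
        cont_cross_comp
          (fun k => (cont_comp hEc k).mono Set.inter_subset_left)
          (fun k => (cont_curl_comp hU₂o hGc k).mono Set.inter_subset_right) i
      have h2 : ContinuousOn (fun y => cross (conjF E₂ y) (curl3 E y) i) (U₁ ∩ U₂) :=
        cont_cross_comp
          (fun k => (cont_comp hGc k).mono Set.inter_subset_right)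
          (fun k => (cont_curl_comp hU₁o hEc k).mono Set.inter_subset_left) i
      exact (h1.sub h2 :)
    exact h12.mono hsub
  -- the divergence sum equals div3
  have hsum : ∀ x ∈ O, (∑ i : Fin 3, fderiv ℝ W x (Pi.single i 1) i) = div3 W x := by
    intro x hx
    have hW := hdW x hx
    have hcomp : ∀ (i : Fin 3) (v : V3), fderiv ℝ W x v i = fderiv ℝ (fun y => W y i) x v := by
      intro i v
      have h : HasFDerivAt (fun y => W y i)
          ((ContinuousLinearMap.proj i : C3 →L[ℝ] ℂ).comp (fderiv ℝ W x)) x :=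
        (ContinuousLinearMap.proj i).hasFDerivAt.comp x hW.hasFDerivAt
      rw [h.fderiv]; rfl
    have hsingle : ∀ i : Fin 3, (Pi.single i 1 : V3) = stdR i := by
      intro i; funext k; simp [stdR, Pi.single_apply]
    rw [Fin.sum_univ_three, hcomp 0, hcomp 1, hcomp 2, hsingle 0, hsingle 1, hsingle 2]
    rfl
  -- integrability
  have hFGcont : ContinuousOn (fun x => cdot (F x) (conjF E₂ x)) (slab c b) := by
    have hFc : ∀ i : Fin 3, ContinuousOn (fun y => F y i) (slab c b) :=
      fun i => (continuousOn_pi.1 hF) i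
    have hGcc : ∀ i : Fin 3, ContinuousOn (fun y => conjF E₂ y i) (slab c b) :=
      fun i => (cont_comp hGc i).mono hU₂s
    exact (((hFc 0).mul (hGcc 0)).add ((hFc 1).mul (hGcc 1))).add ((hFc 2).mul (hGcc 2))
  have hFGi : IntegrableOn (fun x => cdot (F x) (conjF E₂ x)) (Set.Icc lo hi) :=
    (hFGcont.mono hIccSlab).integrableOn_compact isCompact_Icc
  have hpiae : (Set.pi Set.univ fun i => Set.Ioo (lo i) (hi i)) =ᵐ[volume] Set.Icc lo hi :=
    Measure.univ_pi_Ioo_ae_eq_Icc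
  have hmempi : ∀ᵐ x ∂(volume.restrict (Set.Icc lo hi)),
      x ∈ (Set.pi Set.univ fun i => Set.Ioo (lo i) (hi i)) := by
    have h2 := Filter.eventuallyEq_set.1 hpiae
    filter_upwards [ae_restrict_of_ae h2, ae_restrict_mem measurableSet_Icc] with x hx1 hx2
    exact hx1.2 hx2
  have hae : (fun x => ∑ i : Fin 3, fderiv ℝ W x (Pi.single i 1) i)
      =ᵐ[volume.restrict (Set.Icc lo hi)] (fun x => cdot (F x) (conjF E₂ x)) := by
    filter_upwards [hmempi] with x hx
    rw [hsum x (hpiO hx), hdiv x (hpiO hx)]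
  have Hi : IntegrableOn (fun x => ∑ i : Fin 3, fderiv ℝ W x (Pi.single i 1) i)
      (Set.Icc lo hi) := hFGi.congr hae.symm
  have Hd : ∀ x ∈ (Set.pi Set.univ fun i => Set.Ioo (lo i) (hi i)) \ (∅ : Set V3),
      HasFDerivAt W (fderiv ℝ W x) x :=
    fun x hx => (hdW x (hpiO hx.1)).hasFDerivAt
  have key := MeasureTheory.integral_divergence_of_hasFDerivAt_off_countable
    lo hi hle W (fun x => fderiv ℝ W x) ∅ Set.countable_empty hWcont Hd Hi
  -- identify the volume integral
  have hset : slabCell c b = (Set.pi Set.univ fun i => Set.Ioo (lo i) (hi i)) := by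
    ext x
    constructor
    · rintro ⟨h0, h1, h2⟩ i _
      fin_cases i
      · exact h0
      · exact h1
      · exact h2
    · intro h
      exact ⟨h 0 trivial, h 1 trivial, h 2 trivial⟩
  have hLHS : (∫ x in Set.Icc lo hi, ∑ i : Fin 3, fderiv ℝ W x (Pi.single i 1) i)
      = ∫ x in slabCell c b, cdot (F x) (fun i => (starRingEnd ℂ) (E₂ x i)) := by
    rw [integral_congr_ae hae, hset, setIntegral_congr_set hpiae]
    rfl
  -- vanishing on top and bottom faces
  have hWtop : ∀ x : V3, x 2 = b → W x 2 = 0 := by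
    intro x hx2
    have h1 := htop x hx2
    have h2 := htopc x hx2
    have hE0 : E x 0 = 0 := by
      have := congrFun h1 1; simpa [cross, stdC] using this
    have hE1 : E x 1 = 0 := by
      have := congrFun h1 0; simpa [cross, stdC] using this
    have hA0 : curl3 E x 0 = 0 := by
      have := congrFun h2 1; simpa [cross, stdC] using this
    have hA1 : curl3 E x 1 = 0 := by
      have := congrFun h2 0; simpa [cross, stdC] using this
    show (E x 0 * curl3 (conjF E₂) x 1 - E x 1 * curl3 (conjF E₂) x 0)
        - (conjF E₂ x 0 * curl3 E x 1 - conjF E₂ x 1 * curl3 E x 0) = 0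
    rw [hE0, hE1, hA0, hA1]; ring
  have hWbot : ∀ x : V3, x 2 = c → W x 2 = 0 := by
    intro x hx2
    have h1 := hbot x hx2
    have h2 := hbot₂ x hx2
    have hE0 : E x 0 = 0 := by
      have := congrFun h1 1; simpa [cross, stdC] using this
    have hE1 : E x 1 = 0 := by
      have := congrFun h1 0; simpa [cross, stdC] using this
    have hG0 : conjF E₂ x 0 = 0 := by
      have h3 : E₂ x 0 = 0 := by have := congrFun h2 1; simpa [cross, stdC] using this
      simp [conjF, h3]
    have hG1 : conjF E₂ x 1 = 0 := by
      have h3 : E₂ x 1 = 0 := by have := congrFun h2 0; simpa [cross, stdC] using this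
      simp [conjF, h3]
    show (E x 0 * curl3 (conjF E₂) x 1 - E x 1 * curl3 (conjF E₂) x 0)
        - (conjF E₂ x 0 * curl3 E x 1 - conjF E₂ x 1 * curl3 E x 0) = 0
    rw [hE0, hE1, hG0, hG1]; ring
  -- quasiperiodic shifts of W
  have hWshift : ∀ (jj : Fin 3) (αj : ℝ), (jj = 0 ∨ jj = 1) →
      (∀ y ∈ slab c b, E (y + (2 * π) • stdR jj) = Complex.exp (2 * π * αj * Complex.I) • E y) →
      (∀ y ∈ slab c b, E₂ (y + (2 * π) • stdR jj) = Complex.exp (2 * π * αj * Complex.I) • E₂ y) →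
      ∀ y : V3, c < y 2 → y 2 < b → W (y + (2 * π) • stdR jj) = W y := by
    intro jj αj hjj hqpE0 hqpE₂0
    set v : V3 := (2 * π) • stdR jj with hvdef
    have hv2 : v 2 = 0 := by
      rcases hjj with h | h <;> subst h <;> simp [hvdef, stdR]
    set lam : ℂ := Complex.exp (2 * π * αj * Complex.I) with hlamdef
    have hphase : lam * (starRingEnd ℂ) lam = 1 := by
      have harg : (2 * (π : ℂ) * (αj : ℂ) * Complex.I) = ((2 * π * αj : ℝ) : ℂ) * Complex.I := by
        push_cast; ring
      rw [hlamdef, harg, ← Complex.exp_conj, ← Complex.exp_add]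
      have hsumz : ((2 * π * αj : ℝ) : ℂ) * Complex.I
          + (starRingEnd ℂ) (((2 * π * αj : ℝ) : ℂ) * Complex.I) = 0 := by
        rw [map_mul, Complex.conj_ofReal, Complex.conj_I]; ring
      rw [hsumz, Complex.exp_zero]
    have hqpE : ∀ y : V3, c < y 2 → y 2 < b → E (y + v) = lam • E y :=
      fun y h1 h2 => hqpE0 y ⟨h1.le, h2.le⟩
    have hqpG : ∀ y : V3, c < y 2 → y 2 < b →
        conjF E₂ (y + v) = ((starRingEnd ℂ) lam) • conjF E₂ y := by
      intro y h1 h2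
      funext k
      have := congrFun (hqpE₂0 y ⟨h1.le, h2.le⟩) k
      simp only [Pi.smul_apply, smul_eq_mul] at this
      simp only [conjF, Pi.smul_apply, smul_eq_mul, this, map_mul]
    intro y h1 h2
    have hy : y ∈ O := ⟨h1, h2⟩
    have hyv2 : (y + v) 2 = y 2 := by simp [hv2]
    have hyv : y + v ∈ O := ⟨by rw [hyv2]; exact h1, by rw [hyv2]; exact h2⟩
    have hcE : ∀ i, curl3 E (y + v) i = lam * curl3 E y i :=
      curl3_qp hqpE h1 h2 (hdE y hy) (hdE (y + v) hyv)
    have hcG : ∀ i, curl3 (conjF E₂) (y + v) i = (starRingEnd ℂ) lam * curl3 (conjF E₂) y i :=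
      curl3_qp hqpG h1 h2 (hdG y hy) (hdG (y + v) hyv)
    have hEy : ∀ k : Fin 3, E (y + v) k = lam * E y k := by
      intro k
      have := congrFun (hqpE y h1 h2) k
      simpa using this
    have hGy : ∀ k : Fin 3, conjF E₂ (y + v) k = (starRingEnd ℂ) lam * conjF E₂ y k := by
      intro k
      have := congrFun (hqpG y h1 h2) k
      simpa using this
    funext i
    fin_cases i
    · show (E (y + v) 1 * curl3 (conjF E₂) (y + v) 2 - E (y + v) 2 * curl3 (conjF E₂) (y + v) 1)
          - (conjF E₂ (y + v) 1 * curl3 E (y + v) 2 - conjF E₂ (y + v) 2 * curl3 E (y + v) 1)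
        = (E y 1 * curl3 (conjF E₂) y 2 - E y 2 * curl3 (conjF E₂) y 1)
          - (conjF E₂ y 1 * curl3 E y 2 - conjF E₂ y 2 * curl3 E y 1)
      rw [hcE 1, hcE 2, hcG 1, hcG 2, hEy 1, hEy 2, hGy 1, hGy 2]
      linear_combination (E y 1 * curl3 (conjF E₂) y 2 - E y 2 * curl3 (conjF E₂) y 1
        - conjF E₂ y 1 * curl3 E y 2 + conjF E₂ y 2 * curl3 E y 1) * hphase
    · show (E (y + v) 2 * curl3 (conjF E₂) (y + v) 0 - E (y + v) 0 * curl3 (conjF E₂) (y + v) 2)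
          - (conjF E₂ (y + v) 2 * curl3 E (y + v) 0 - conjF E₂ (y + v) 0 * curl3 E (y + v) 2)
        = (E y 2 * curl3 (conjF E₂) y 0 - E y 0 * curl3 (conjF E₂) y 2)
          - (conjF E₂ y 2 * curl3 E y 0 - conjF E₂ y 0 * curl3 E y 2)
      rw [hcE 0, hcE 2, hcG 0, hcG 2, hEy 0, hEy 2, hGy 0, hGy 2]
      linear_combination (E y 2 * curl3 (conjF E₂) y 0 - E y 0 * curl3 (conjF E₂) y 2
        - conjF E₂ y 2 * curl3 E y 0 + conjF E₂ y 0 * curl3 E y 2) * hphase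
    · show (E (y + v) 0 * curl3 (conjF E₂) (y + v) 1 - E (y + v) 1 * curl3 (conjF E₂) (y + v) 0)
          - (conjF E₂ (y + v) 0 * curl3 E (y + v) 1 - conjF E₂ (y + v) 1 * curl3 E (y + v) 0)
        = (E y 0 * curl3 (conjF E₂) y 1 - E y 1 * curl3 (conjF E₂) y 0)
          - (conjF E₂ y 0 * curl3 E y 1 - conjF E₂ y 1 * curl3 E y 0)
      rw [hcE 0, hcE 1, hcG 0, hcG 1, hEy 0, hEy 1, hGy 0, hGy 1]
      linear_combination (E y 0 * curl3 (conjF E₂) y 1 - E y 1 * curl3 (conjF E₂) y 0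
        - conjF E₂ y 0 * curl3 E y 1 + conjF E₂ y 1 * curl3 E y 0) * hphase
  have hWs0 : ∀ y : V3, c < y 2 → y 2 < b → W (y + (2 * π) • stdR 0) = W y :=
    hWshift 0 α.1 (Or.inl rfl) (fun y hy => (hEqp y hy).1) (fun y hy => (hE₂qp y hy).1)
  have hWs1 : ∀ y : V3, c < y 2 → y 2 < b → W (y + (2 * π) • stdR 1) = W y :=
    hWshift 1 α.2 (Or.inr rfl) (fun y hy => (hEqp y hy).2) (fun y hy => (hE₂qp y hy).2)
  -- the null set on faces
  have hN : volume {yy : Fin 2 → ℝ | yy 1 = c ∨ yy 1 = b} = 0 := by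
    have hNset : {yy : Fin 2 → ℝ | yy 1 = c ∨ yy 1 = b}
        = Set.pi Set.univ (fun j : Fin 2 => if j = 1 then ({c, b} : Set ℝ) else Set.univ) := by
      ext yy
      simp [Set.mem_pi, Fin.forall_fin_two]
    have hcb0 : volume ({c, b} : Set ℝ) = 0 :=
      (Set.toFinite ({c, b} : Set ℝ)).countable.measure_zero volume
    rw [hNset, volume_pi_pi, Fin.prod_univ_two]
    simp [hcb0]
  have haeN : ∀ᵐ yy : Fin 2 → ℝ ∂volume, ¬(yy 1 = c ∨ yy 1 = b) :=
    measure_eq_zero_iff_ae_notMem.1 hN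
  -- face cancellations
  have hface : ∀ jj : Fin 3, jj = 0 ∨ jj = 1 →
      (∀ y : V3, c < y 2 → y 2 < b → W (y + (2 * π) • stdR jj) = W y) →
      (∫ x in Set.Icc (lo ∘ jj.succAbove) (hi ∘ jj.succAbove),
          W (jj.insertNth (hi jj) x) jj)
        = ∫ x in Set.Icc (lo ∘ jj.succAbove) (hi ∘ jj.succAbove),
          W (jj.insertNth (lo jj) x) jj := by
    intro jj hjj hWs
    apply setIntegral_congr_ae measurableSet_Icc
    filter_upwards [haeN] with yy hyy hIcc
    have h1 : c ≤ yy 1 := by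
      have := hIcc.1 1
      rcases hjj with h | h <;> subst h <;> simpa [hlodef] using this
    have h2 : yy 1 ≤ b := by
      have := hIcc.2 1
      rcases hjj with h | h <;> subst h <;> simpa [hhidef] using this
    have h1' : c < yy 1 := lt_of_le_of_ne h1 (fun h => hyy (Or.inl h.symm))
    have h2' : yy 1 < b := lt_of_le_of_ne h2 (fun h => hyy (Or.inr h))
    have hz : (jj.insertNth (hi jj) yy : V3)
        = (jj.insertNth (lo jj) yy : V3) + (2 * π) • stdR jj := by
      rcases hjj with h | h <;> subst h
      · funext k
        fin_cases k
        · show (2 * π : ℝ) = 0 + 2 * π * 1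
          ring
        · show yy 0 = yy 0 + 2 * π * 0
          ring
        · show yy 1 = yy 1 + 2 * π * 0
          ring
      · funext k
        fin_cases k
        · show yy 0 = yy 0 + 2 * π * 0
          ring
        · show (2 * π : ℝ) = 0 + 2 * π * 1
          ring
        · show yy 1 = yy 1 + 2 * π * 0
          ring
    have hz2 : ((jj.insertNth (lo jj) yy : V3)) 2 = yy 1 := by
      rcases hjj with h | h <;> subst h <;> rfl
    rw [hz]
    exact congrFun (hWs _ (by rw [hz2]; exact h1') (by rw [hz2]; exact h2')) jj
  have hface0 := hface 0 (Or.inl rfl) hWs0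
  have hface1 := hface 1 (Or.inr rfl) hWs1
  -- top and bottom face integrals vanish
  have htopint : (∫ x in Set.Icc (lo ∘ (2 : Fin 3).succAbove) (hi ∘ (2 : Fin 3).succAbove),
      W ((2 : Fin 3).insertNth (hi 2) x) 2) = 0 := by
    rw [setIntegral_congr_fun measurableSet_Icc
      (fun yy _ => hWtop ((2 : Fin 3).insertNth (hi 2) yy) rfl)]
    simp
  have hbotint : (∫ x in Set.Icc (lo ∘ (2 : Fin 3).succAbove) (hi ∘ (2 : Fin 3).succAbove),
      W ((2 : Fin 3).insertNth (lo 2) x) 2) = 0 := by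
    rw [setIntegral_congr_fun measurableSet_Icc
      (fun yy _ => hWbot ((2 : Fin 3).insertNth (lo 2) yy) rfl)]
    simp
  rw [← hLHS, key, Fin.sum_univ_three, hface0, hface1, htopint, hbotint]
  ring
end
end

section
/- Let f, g ∈ C²(ℝ²) be 2π-periodic in each variable with f < g pointwise, Ω₁ = {f(x₁,x₂) < x₃ < g(x₁,x₂)}, and let κ : Ω̄₁ → ℂ be continuous and 2π-periodic in x₁,x₂. Suppose E and W are C² vector fields with values in ℂ³ on Ω̄₁, E is α-quasi-periodic, W is (−α)-quasi-periodic, and curl curl E − κ E = 0 and curl curl W − κ W = 0 in Ω₁. Then the Green boundary integrals over the top and bottom profiles of one period cell are equal: ∫_{(0,2π)²} [ (ν_g × curl E)·W − (ν_g × curl W)·E ](x', g(x')) √(1+|∇g(x')|²) dx' = ∫_{(0,2π)²} [ (ν_f × curl E)·W − (ν_f × curl W)·E ](x', f(x')) √(1+|∇f(x')|²) dx', where ν_φ(x') = (−∂₁φ(x'), −∂₂φ(x'), 1)/√(1+|∇φ(x')|²) for φ = g resp. f. (This is the second vector Green identity between two biperiodic graphs, with the vertical side contributions cancelling by quasi-periodicity.)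 -/
noncomputable section

open MeasureTheory Real Set

/-- The closed layer between the graphs of `f` and `g`. -/
def layer (f g : ℝ × ℝ → ℝ) : Set V3 := {x : V3 | f (x 0, x 1) ≤ x 2 ∧ x 2 ≤ g (x 0, x 1)}

/-- The Green integrand `[(ν_φ × curl E)·W - (ν_φ × curl W)·E](x',φ(x')) √(1+|∇φ(x')|²)`
on the graph of `φ`. -/
def greenGraph (φ : ℝ × ℝ → ℝ) (E W : V3 → C3) (x' : ℝ × ℝ) : ℂ :=
  (cdot (cross (toC3 (nvec φ x')) (curl3 E (graphPt φ x'))) (W (graphPt φ x')) -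
    cdot (cross (toC3 (nvec φ x')) (curl3 W (graphPt φ x'))) (E (graphPt φ x'))) *
    ((areaEl φ x' : ℝ) : ℂ)

namespace S13

open ContinuousLinearMap

lemma v3_eq (v : V3) : v = v 0 • stdR 0 + v 1 • stdR 1 + v 2 • stdR 2 := by
  funext k; fin_cases k <;> simp [stdR]

lemma clm_apply_v3 (L : V3 →L[ℝ] ℂ) (v : V3) :
    L v = v 0 • L (stdR 0) + v 1 • L (stdR 1) + v 2 • L (stdR 2) := by
  conv_lhs => rw [v3_eq v]
  simp

lemma pd_sub {A B : V3 → ℂ} {x : V3} (hA : DifferentiableAt ℝ A x)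
    (hB : DifferentiableAt ℝ B x) (j : Fin 3) :
    pd j (fun y => A y - B y) x = pd j A x - pd j B x := by
  unfold pd; rw [fderiv_fun_sub hA hB]; simp

lemma pd_mul {A B : V3 → ℂ} {x : V3} (hA : DifferentiableAt ℝ A x)
    (hB : DifferentiableAt ℝ B x) (j : Fin 3) :
    pd j (fun y => A y * B y) x = pd j A x * B x + A x * pd j B x := by
  unfold pd; rw [fderiv_fun_mul hA hB]; simp [smul_eq_mul]; ring

lemma pd_comp {F : V3 → ℂ} {S : V3 → V3} {y : V3} {L : V3 →L[ℝ] V3}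
    (hF : DifferentiableAt ℝ F (S y)) (hS : HasFDerivAt S L y) (j : Fin 3) :
    pd j (fun x => F (S x)) y =
      (L (stdR j) 0 : ℝ) • pd 0 F (S y) + (L (stdR j) 1 : ℝ) • pd 1 F (S y) +
        (L (stdR j) 2 : ℝ) • pd 2 F (S y) := by
  have h := (hF.hasFDerivAt.comp y hS).fderiv
  unfold pd
  rw [show (fun x => F (S x)) = F ∘ S from rfl, h, ContinuousLinearMap.comp_apply,
    clm_apply_v3]

lemma pd_ofReal {r : V3 → ℝ} {x : V3} {L : V3 →L[ℝ] ℝ} (hr : HasFDerivAt r L x) (j : Fin 3) :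
    pd j (fun y => ((r y : ℝ) : ℂ)) x = ((L (stdR j) : ℝ) : ℂ) := by
  have h := (Complex.ofRealCLM.hasFDerivAt.comp x hr).fderiv
  unfold pd
  rw [show (fun y => ((r y : ℝ) : ℂ)) = Complex.ofRealCLM ∘ r from rfl, h]
  simp

end S13
namespace S13

open ContinuousLinearMap

/-- `(x₁,x₂)` projection as a CLM. -/
def pi2 : V3 →L[ℝ] ℝ × ℝ := (proj 0).prod (proj 1)

lemma pi2_apply (v : V3) : pi2 v = (v 0, v 1) := rfl

def Smap (f g : ℝ × ℝ → ℝ) (y : V3) : V3 :=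
  fun i => if i = 2 then f (y 0, y 1) + y 2 * (g (y 0, y 1) - f (y 0, y 1)) else y i

/-- direction derivatives of the vertical component of `Smap`. -/
def eld (f g : ℝ × ℝ → ℝ) (y : V3) : V3 :=
  ![pdR 0 f (y 0, y 1) + y 2 * (pdR 0 g (y 0, y 1) - pdR 0 f (y 0, y 1)),
    pdR 1 f (y 0, y 1) + y 2 * (pdR 1 g (y 0, y 1) - pdR 1 f (y 0, y 1)),
    g (y 0, y 1) - f (y 0, y 1)]

def Ufield (E W : V3 → C3) (x : V3) : C3 :=
  cross (curl3 E x) (W x) - cross (curl3 W x) (E x)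

def Vfun (f g : ℝ × ℝ → ℝ) (E W : V3 → C3) (k : Fin 3) (y : V3) : ℂ :=
  Ufield E W (Smap f g y) k * ((g (y 0, y 1) - f (y 0, y 1) : ℝ) : ℂ)

def W3f (f g : ℝ × ℝ → ℝ) (E W : V3 → C3) (y : V3) : ℂ :=
  Ufield E W (Smap f g y) 2 - ((eld f g y 0 : ℝ) : ℂ) * Ufield E W (Smap f g y) 0 -
    ((eld f g y 1 : ℝ) : ℂ) * Ufield E W (Smap f g y) 1

/-- the generic scalar building-block derivative. -/
lemma aux_hasFDerivAt {p q : ℝ × ℝ → ℝ} (hp : Differentiable ℝ p) (hq : Differentiable ℝ q)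
    (y : V3) :
    ∃ L : V3 →L[ℝ] ℝ, HasFDerivAt (fun x : V3 => p (x 0, x 1) + x 2 * q (x 0, x 1)) L y ∧
      ∀ j, L (stdR j) = fderiv ℝ p (y 0, y 1) (stdR j 0, stdR j 1) + stdR j 2 * q (y 0, y 1)
          + y 2 * fderiv ℝ q (y 0, y 1) (stdR j 0, stdR j 1) := by
  have hπ : HasFDerivAt (fun x : V3 => (x 0, x 1)) pi2 y := pi2.hasFDerivAt
  have hp' : HasFDerivAt (fun x : V3 => p (x 0, x 1))
      ((fderiv ℝ p (y 0, y 1)).comp pi2) y :=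
    ((hp (y 0, y 1)).hasFDerivAt).comp y hπ
  have hq' : HasFDerivAt (fun x : V3 => q (x 0, x 1))
      ((fderiv ℝ q (y 0, y 1)).comp pi2) y :=
    ((hq (y 0, y 1)).hasFDerivAt).comp y hπ
  have h2 : HasFDerivAt (fun x : V3 => x 2) (proj 2 : V3 →L[ℝ] ℝ) y := hasFDerivAt_apply 2 y
  refine ⟨_, hp'.add (h2.mul hq'), fun j => ?_⟩
  simp [ContinuousLinearMap.add_apply, ContinuousLinearMap.smul_apply, pi2_apply,
    smul_eq_mul]
  ring

lemma smap_hasFDerivAt {f g : ℝ × ℝ → ℝ} (hf : ContDiff ℝ 2 f) (hg : ContDiff ℝ 2 g)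
    (y : V3) :
    ∃ M : V3 →L[ℝ] V3, HasFDerivAt (Smap f g) M y ∧
      ∀ j, M (stdR j) = fun k => if k = 2 then eld f g y j else stdR j k := by
  obtain ⟨L, hL, hLa⟩ := aux_hasFDerivAt (p := f) (q := fun a => g a - f a)
    (hf.differentiable (by norm_num))
    ((hg.differentiable (by norm_num)).sub (hf.differentiable (by norm_num))) y
  set D : Fin 3 → (V3 →L[ℝ] ℝ) := fun i => if i = 2 then L else proj i with hD
  refine ⟨ContinuousLinearMap.pi D, ?_, ?_⟩
  · apply hasFDerivAt_pi.2
    intro i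
    fin_cases i
    · simpa [Smap, hD] using (hasFDerivAt_apply (0 : Fin 3) y)
    · simpa [Smap, hD] using (hasFDerivAt_apply (1 : Fin 3) y)
    · simpa [Smap, hD] using hL
  · intro j
    funext k
    by_cases hk : k = 2
    · subst hk
      have hsub : fderiv ℝ (fun a => g a - f a) (y 0, y 1) =
          fderiv ℝ g (y 0, y 1) - fderiv ℝ f (y 0, y 1) :=
        fderiv_sub (hg.differentiable (by norm_num) _)
          (hf.differentiable (by norm_num) _)
      have hLj := hLa j
      rw [hsub] at hLj
      rw [ContinuousLinearMap.pi_apply]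
      show L (stdR j) = eld f g y j
      rw [hLj]
      fin_cases j <;>
        simp [stdR, pdR, eld, ContinuousLinearMap.sub_apply, Prod.mk_zero_zero] <;> ring
    · simp [ContinuousLinearMap.pi_apply, hD, hk]

end S13
namespace S13

open ContinuousLinearMap

section Reg

variable {U : Set V3} {E : V3 → C3}

lemma diffAt_comp (hE : DifferentiableAt ℝ E x) (i : Fin 3) :
    DifferentiableAt ℝ (fun y => E y i) x :=
  ((proj i : C3 →L[ℂ] ℂ).restrictScalars ℝ).differentiableAt.comp x hE

lemma pd_eq_fderiv (hE : DifferentiableAt ℝ E x) (i j : Fin 3) :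
    pd j (fun y => E y i) x = fderiv ℝ E x (stdR j) i := by
  have h := (((proj i : C3 →L[ℂ] ℂ).restrictScalars ℝ).hasFDerivAt.comp x
    hE.hasFDerivAt).fderiv
  unfold pd
  rw [show (fun y => E y i) = ((proj i : C3 →L[ℂ] ℂ).restrictScalars ℝ) ∘ E from rfl, h]
  rfl

variable (hU : IsOpen U) (hE : ContDiffOn ℝ 2 E U)
include hU hE

lemma contDiffOn_comp (i : Fin 3) : ContDiffOn ℝ 1 (fun x => E x i) U :=
  (((proj i : C3 →L[ℂ] ℂ).restrictScalars ℝ).contDiff.comp_contDiffOn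
    (hE.of_le (by norm_num)))

lemma contDiffOn_pdE (i j : Fin 3) :
    ContDiffOn ℝ 1 (fun x => pd j (fun y => E y i) x) U := by
  have h1 : ContDiffOn ℝ 1 (fderiv ℝ E) U := hE.fderiv_of_isOpen hU (by norm_num)
  have h2 : ContDiffOn ℝ 1 (fun x => fderiv ℝ E x (stdR j) i) U := by
    exact (((proj i : C3 →L[ℂ] ℂ).restrictScalars ℝ).comp
      (ContinuousLinearMap.apply ℝ C3 (stdR j) :
        (V3 →L[ℝ] C3) →L[ℝ] C3)).contDiff.comp_contDiffOn h1
  exact h2.congr fun x hx =>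
    pd_eq_fderiv ((hE.differentiableOn (by norm_num)).differentiableAt (hU.mem_nhds hx)) i j

lemma contDiffOn_curlComp (i : Fin 3) :
    ContDiffOn ℝ 1 (fun x => curl3 E x i) U := by
  fin_cases i
  · exact ((contDiffOn_pdE hU hE 2 1).sub (contDiffOn_pdE hU hE 1 2)).congr
      (fun x _ => by simp [curl3])
  · exact ((contDiffOn_pdE hU hE 0 2).sub (contDiffOn_pdE hU hE 2 0)).congr
      (fun x _ => by simp [curl3])
  · exact ((contDiffOn_pdE hU hE 1 0).sub (contDiffOn_pdE hU hE 0 1)).congr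
      (fun x _ => by simp [curl3])

end Reg

lemma contDiffOn_UfieldComp {U : Set V3} {E W : V3 → C3} (hU : IsOpen U)
    (hE : ContDiffOn ℝ 2 E U) (hW : ContDiffOn ℝ 2 W U) (k : Fin 3) :
    ContDiffOn ℝ 1 (fun x => Ufield E W x k) U := by
  have cE := contDiffOn_curlComp hU hE
  have cW := contDiffOn_curlComp hU hW
  have vE := contDiffOn_comp hU hE
  have vW := contDiffOn_comp hU hW
  fin_cases k
  · exact (((cE 1).mul (vW 2)).sub ((cE 2).mul (vW 1))).sub
      (((cW 1).mul (vE 2)).sub ((cW 2).mul (vE 1))) |>.congr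
      (fun x _ => by simp [Ufield, cross])
  · exact (((cE 2).mul (vW 0)).sub ((cE 0).mul (vW 2))).sub
      (((cW 2).mul (vE 0)).sub ((cW 0).mul (vE 2))) |>.congr
      (fun x _ => by simp [Ufield, cross])
  · exact (((cE 0).mul (vW 1)).sub ((cE 1).mul (vW 0))).sub
      (((cW 0).mul (vE 1)).sub ((cW 1).mul (vE 0))) |>.congr
      (fun x _ => by simp [Ufield, cross])

lemma cdot_comm (a b : C3) : cdot a b = cdot b a := by simp [cdot]; ring

/-- divergence of a cross product. -/
lemma div3_cross {a b : V3 → C3} {z : V3}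
    (ha : ∀ i, DifferentiableAt ℝ (fun x => a x i) z)
    (hb : ∀ i, DifferentiableAt ℝ (fun x => b x i) z) :
    div3 (fun x => cross (a x) (b x)) z =
      cdot (curl3 a z) (b z) - cdot (a z) (curl3 b z) := by
  have e0 : (fun y => cross (a y) (b y) 0) = fun y => a y 1 * b y 2 - a y 2 * b y 1 := by
    funext y; simp [cross]
  have e1 : (fun y => cross (a y) (b y) 1) = fun y => a y 2 * b y 0 - a y 0 * b y 2 := by
    funext y; simp [cross]
  have e2 : (fun y => cross (a y) (b y) 2) = fun y => a y 0 * b y 1 - a y 1 * b y 0 := by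
    funext y; simp [cross]
  unfold div3
  rw [e0, e1, e2,
    pd_sub ((ha 1).fun_mul (hb 2)) ((ha 2).fun_mul (hb 1)) 0,
    pd_sub ((ha 2).fun_mul (hb 0)) ((ha 0).fun_mul (hb 2)) 1,
    pd_sub ((ha 0).fun_mul (hb 1)) ((ha 1).fun_mul (hb 0)) 2,
    pd_mul (ha 1) (hb 2) 0, pd_mul (ha 2) (hb 1) 0,
    pd_mul (ha 2) (hb 0) 1, pd_mul (ha 0) (hb 2) 1,
    pd_mul (ha 0) (hb 1) 2, pd_mul (ha 1) (hb 0) 2]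
  simp [cdot, curl3]
  ring

/-- the divergence of the Green field. -/
lemma div3_Ufield {U : Set V3} {E W : V3 → C3} (hU : IsOpen U)
    (hE : ContDiffOn ℝ 2 E U) (hW : ContDiffOn ℝ 2 W U) {z : V3} (hz : z ∈ U) :
    div3 (Ufield E W) z =
      cdot (curl3 (curl3 E) z) (W z) - cdot (curl3 (curl3 W) z) (E z) := by
  have dAt : ∀ (F : V3 → C3), ContDiffOn ℝ 2 F U →
      (∀ i, DifferentiableAt ℝ (fun x => curl3 F x i) z) ∧
      (∀ i, DifferentiableAt ℝ (fun x => F x i) z) := by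
    intro F hF
    constructor
    · intro i
      exact ((contDiffOn_curlComp hU hF i).differentiableOn (by norm_num)).differentiableAt
        (hU.mem_nhds hz)
    · intro i
      exact ((contDiffOn_comp hU hF i).differentiableOn (by norm_num)).differentiableAt
        (hU.mem_nhds hz)
  obtain ⟨hcE, hvE⟩ := dAt E hE
  obtain ⟨hcW, hvW⟩ := dAt W hW
  have hsplit : div3 (Ufield E W) z =
      div3 (fun x => cross (curl3 E x) (W x)) z -
      div3 (fun x => cross (curl3 W x) (E x)) z := by
    have hA : ∀ i, DifferentiableAt ℝ (fun x => cross (curl3 E x) (W x) i) z := by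
      intro i; fin_cases i <;>
        · simp only [cross, Matrix.cons_val_zero, Matrix.cons_val_one, Matrix.head_cons,
            Matrix.cons_val_two, Matrix.tail_cons]
          exact ((hcE _).mul (hvW _)).sub ((hcE _).mul (hvW _))
    have hB : ∀ i, DifferentiableAt ℝ (fun x => cross (curl3 W x) (E x) i) z := by
      intro i; fin_cases i <;>
        · simp only [cross, Matrix.cons_val_zero, Matrix.cons_val_one, Matrix.head_cons,
            Matrix.cons_val_two, Matrix.tail_cons]
          exact ((hcW _).mul (hvE _)).sub ((hcW _).mul (hvE _))
    unfold div3
    rw [show (fun y => Ufield E W y 0) =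
        (fun y => cross (curl3 E y) (W y) 0 - cross (curl3 W y) (E y) 0) from rfl,
      show (fun y => Ufield E W y 1) =
        (fun y => cross (curl3 E y) (W y) 1 - cross (curl3 W y) (E y) 1) from rfl,
      show (fun y => Ufield E W y 2) =
        (fun y => cross (curl3 E y) (W y) 2 - cross (curl3 W y) (E y) 2) from rfl,
      pd_sub (hA 0) (hB 0) 0, pd_sub (hA 1) (hB 1) 1, pd_sub (hA 2) (hB 2) 2]
    ring
  rw [hsplit, div3_cross hcE hvW, div3_cross hcW hvE,
    cdot_comm (curl3 W z) (curl3 E z)]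
  ring

end S13
namespace S13

open ContinuousLinearMap

lemma contDiff_pdR {φ : ℝ × ℝ → ℝ} (hφ : ContDiff ℝ 2 φ) (j : Fin 2) :
    ContDiff ℝ 1 (pdR j φ) := by
  have h1 : ContDiff ℝ 1 (fderiv ℝ φ) := hφ.fderiv_right (by norm_num)
  exact h1.clm_apply contDiff_const

lemma diff_pdR {φ : ℝ × ℝ → ℝ} (hφ : ContDiff ℝ 2 φ) (j : Fin 2) :
    Differentiable ℝ (pdR j φ) :=
  (contDiff_pdR hφ j).differentiable (by norm_num)

lemma stdR_val (j k : Fin 3) : stdR j k = if k = j then 1 else 0 := rfl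

/-- derivative data for the gap function. -/
lemma hgap_hasFDerivAt {f g : ℝ × ℝ → ℝ} (hf : ContDiff ℝ 2 f) (hg : ContDiff ℝ 2 g)
    (y : V3) :
    ∃ L : V3 →L[ℝ] ℝ, HasFDerivAt (fun x : V3 => g (x 0, x 1) - f (x 0, x 1)) L y ∧
      L (stdR 0) = pdR 0 g (y 0, y 1) - pdR 0 f (y 0, y 1) ∧
      L (stdR 1) = pdR 1 g (y 0, y 1) - pdR 1 f (y 0, y 1) ∧
      L (stdR 2) = 0 := by
  obtain ⟨L, hL, hLa⟩ := aux_hasFDerivAt (p := fun a => g a - f a) (q := fun _ => (0 : ℝ))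
    ((hg.differentiable (by norm_num)).sub (hf.differentiable (by norm_num)))
    (differentiable_const 0) y
  have heq : (fun x : V3 => (g (x 0, x 1) - f (x 0, x 1)) + x 2 * (0 : ℝ)) =
      fun x : V3 => g (x 0, x 1) - f (x 0, x 1) := by funext x; ring
  rw [heq] at hL
  have hsub : fderiv ℝ (fun a => g a - f a) (y 0, y 1) =
      fderiv ℝ g (y 0, y 1) - fderiv ℝ f (y 0, y 1) :=
    fderiv_sub (hg.differentiable (by norm_num) _) (hf.differentiable (by norm_num) _)
  refine ⟨L, hL, ?_, ?_, ?_⟩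
  · rw [hLa 0, hsub]; simp [stdR, pdR, ContinuousLinearMap.sub_apply]
  · rw [hLa 1, hsub]; simp [stdR, pdR, ContinuousLinearMap.sub_apply]
  · rw [hLa 2, hsub]
    have h0 : ((stdR 2 0 : ℝ), (stdR 2 1 : ℝ)) = (0 : ℝ × ℝ) := by simp [stdR]
    rw [h0]
    simp [stdR]

/-- derivative data for the `eld` coefficient functions (`i = 0, 1`). -/
lemma eld_hasFDerivAt {f g : ℝ × ℝ → ℝ} (hf : ContDiff ℝ 2 f) (hg : ContDiff ℝ 2 g)
    (y : V3) (i : Fin 2) :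
    ∃ L : V3 →L[ℝ] ℝ,
      HasFDerivAt (fun x : V3 => eld f g x ⟨i, by omega⟩) L y ∧
      L (stdR 2) = pdR i g (y 0, y 1) - pdR i f (y 0, y 1) := by
  obtain ⟨L, hL, hLa⟩ := aux_hasFDerivAt (p := pdR i f)
    (q := fun a => pdR i g a - pdR i f a) (diff_pdR hf i)
    ((diff_pdR hg i).sub (diff_pdR hf i)) y
  have heq : (fun x : V3 => pdR i f (x 0, x 1) + x 2 * (pdR i g (x 0, x 1) - pdR i f (x 0, x 1)))
      = fun x : V3 => eld f g x ⟨i, by omega⟩ := by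
    funext x
    fin_cases i <;> simp [eld]
  rw [heq] at hL
  refine ⟨L, hL, ?_⟩
  rw [hLa]
  have h0 : ((stdR 2 0 : ℝ), (stdR 2 1 : ℝ)) = (0 : ℝ × ℝ) := by
    simp [stdR]
  rw [h0]
  simp [stdR]

/-- THE key pointwise identity. -/
lemma key_pointwise {f g : ℝ × ℝ → ℝ} {E W : V3 → C3} {U : Set V3}
    (hU : IsOpen U) (hf : ContDiff ℝ 2 f) (hg : ContDiff ℝ 2 g)
    (hE : ContDiffOn ℝ 2 E U) (hW : ContDiffOn ℝ 2 W U)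
    {y : V3} (hy : Smap f g y ∈ U) :
    pd 0 (Vfun f g E W 0) y + pd 1 (Vfun f g E W 1) y + pd 2 (W3f f g E W) y
      = ((g (y 0, y 1) - f (y 0, y 1) : ℝ) : ℂ) * div3 (Ufield E W) (Smap f g y) := by
  obtain ⟨M, hM, hMa⟩ := smap_hasFDerivAt hf hg y
  set z := Smap f g y with hz
  set a := ((y 0 : ℝ), (y 1 : ℝ)) with ha
  -- differentiability of the field components at z
  have hFd : ∀ k, DifferentiableAt ℝ (fun x => Ufield E W x k) z := fun k =>
    ((contDiffOn_UfieldComp hU hE hW k).differentiableOn (by norm_num)).differentiableAt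
      (hU.mem_nhds hy)
  have hSd : DifferentiableAt ℝ (Smap f g) y := hM.differentiableAt
  have hCd : ∀ k, DifferentiableAt ℝ (fun x => Ufield E W (Smap f g x) k) y := fun k =>
    ((hFd k).comp y hSd :)
  -- composition formula
  have hMc : ∀ j k, (M (stdR j)) k = if k = 2 then eld f g y j else stdR j k := by
    intro j k; rw [hMa j]
  have hcomp : ∀ j k, pd j (fun x => Ufield E W (Smap f g x) k) y =
      ((stdR j 0 : ℝ) : ℂ) * pd 0 (fun x => Ufield E W x k) z +
      ((stdR j 1 : ℝ) : ℂ) * pd 1 (fun x => Ufield E W x k) z +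
      ((eld f g y j : ℝ) : ℂ) * pd 2 (fun x => Ufield E W x k) z := by
    intro j k
    have h0 : M (stdR j) 0 = stdR j 0 := by rw [hMa]; exact if_neg (by decide)
    have h1 : M (stdR j) 1 = stdR j 1 := by rw [hMa]; exact if_neg (by decide)
    have h2 : M (stdR j) 2 = eld f g y j := by rw [hMa]; exact if_pos rfl
    rw [pd_comp (hFd k) hM j, h0, h1, h2]
    simp [Complex.real_smul, hz]
  -- the gap function
  obtain ⟨Lh, hLh, hLh0, hLh1, hLh2⟩ := hgap_hasFDerivAt hf hg y
  have hgapC : ∀ j, pd j (fun x : V3 => ((g (x 0, x 1) - f (x 0, x 1) : ℝ) : ℂ)) y =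
      ((Lh (stdR j) : ℝ) : ℂ) := fun j => pd_ofReal hLh j
  have hgapD : DifferentiableAt ℝ (fun x : V3 => ((g (x 0, x 1) - f (x 0, x 1) : ℝ) : ℂ)) y :=
    (Complex.ofRealCLM.hasFDerivAt.comp y hLh).differentiableAt
  -- the eld coefficient functions
  obtain ⟨L0, hL0, hL0a⟩ := eld_hasFDerivAt hf hg y 0
  obtain ⟨L1, hL1, hL1a⟩ := eld_hasFDerivAt hf hg y 1
  have he0C : pd 2 (fun x : V3 => ((eld f g x 0 : ℝ) : ℂ)) y =
      ((pdR 0 g a - pdR 0 f a : ℝ) : ℂ) := by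
    rw [show ((0 : Fin 3)) = (⟨(0 : Fin 2), by omega⟩ : Fin 3) from rfl]
    rw [pd_ofReal hL0 2, hL0a]
  have he1C : pd 2 (fun x : V3 => ((eld f g x 1 : ℝ) : ℂ)) y =
      ((pdR 1 g a - pdR 1 f a : ℝ) : ℂ) := by
    rw [show ((1 : Fin 3)) = (⟨(1 : Fin 2), by omega⟩ : Fin 3) from rfl]
    rw [pd_ofReal hL1 2, hL1a]
  have he0D : DifferentiableAt ℝ (fun x : V3 => ((eld f g x 0 : ℝ) : ℂ)) y := by
    rw [show ((0 : Fin 3)) = (⟨(0 : Fin 2), by omega⟩ : Fin 3) from rfl]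
    exact (Complex.ofRealCLM.hasFDerivAt.comp y hL0).differentiableAt
  have he1D : DifferentiableAt ℝ (fun x : V3 => ((eld f g x 1 : ℝ) : ℂ)) y := by
    rw [show ((1 : Fin 3)) = (⟨(1 : Fin 2), by omega⟩ : Fin 3) from rfl]
    exact (Complex.ofRealCLM.hasFDerivAt.comp y hL1).differentiableAt
  -- expand the three pd's
  have hV0 : pd 0 (Vfun f g E W 0) y =
      pd 0 (fun x => Ufield E W (Smap f g x) 0) y * ((g a - f a : ℝ) : ℂ) +
      Ufield E W z 0 * ((pdR 0 g a - pdR 0 f a : ℝ) : ℂ) := by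
    rw [show Vfun f g E W 0 = (fun x => (fun x' => Ufield E W (Smap f g x') 0) x *
      (fun x' : V3 => ((g (x' 0, x' 1) - f (x' 0, x' 1) : ℝ) : ℂ)) x) from rfl,
      pd_mul (hCd 0) hgapD 0, hgapC 0, hLh0]
  have hV1 : pd 1 (Vfun f g E W 1) y =
      pd 1 (fun x => Ufield E W (Smap f g x) 1) y * ((g a - f a : ℝ) : ℂ) +
      Ufield E W z 1 * ((pdR 1 g a - pdR 1 f a : ℝ) : ℂ) := by
    rw [show Vfun f g E W 1 = (fun x => (fun x' => Ufield E W (Smap f g x') 1) x *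
      (fun x' : V3 => ((g (x' 0, x' 1) - f (x' 0, x' 1) : ℝ) : ℂ)) x) from rfl,
      pd_mul (hCd 1) hgapD 1, hgapC 1, hLh1]
  have hW3 : pd 2 (W3f f g E W) y =
      pd 2 (fun x => Ufield E W (Smap f g x) 2) y -
      (((pdR 0 g a - pdR 0 f a : ℝ) : ℂ) * Ufield E W z 0 +
        ((eld f g y 0 : ℝ) : ℂ) * pd 2 (fun x => Ufield E W (Smap f g x) 0) y) -
      (((pdR 1 g a - pdR 1 f a : ℝ) : ℂ) * Ufield E W z 1 +
        ((eld f g y 1 : ℝ) : ℂ) * pd 2 (fun x => Ufield E W (Smap f g x) 1) y) := by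
    rw [show W3f f g E W = (fun x => ((fun x' => Ufield E W (Smap f g x') 2) x -
        (fun x' => ((eld f g x' 0 : ℝ) : ℂ) * Ufield E W (Smap f g x') 0) x) -
        (fun x' => ((eld f g x' 1 : ℝ) : ℂ) * Ufield E W (Smap f g x') 1) x) from rfl,
      pd_sub ((hCd 2).fun_sub (he0D.fun_mul (hCd 0))) (he1D.fun_mul (hCd 1)) 2,
      pd_sub (hCd 2) (he0D.fun_mul (hCd 0)) 2,
      pd_mul he0D (hCd 0) 2, pd_mul he1D (hCd 1) 2, he0C, he1C]
  rw [hV0, hV1, hW3, hcomp 0 0, hcomp 1 1, hcomp 2 0, hcomp 2 1, hcomp 2 2]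
  have he2 : eld f g y 2 = g a - f a := by simp [eld, ha]
  have hdiv : div3 (Ufield E W) z =
      pd 0 (fun x => Ufield E W x 0) z + pd 1 (fun x => Ufield E W x 1) z +
      pd 2 (fun x => Ufield E W x 2) z := rfl
  rw [hdiv, he2]
  simp [stdR_val]
  ring

end S13
namespace S13

lemma cross_smul_smul (a b : ℂ) (u w : C3) :
    cross (a • u) (b • w) = (a * b) • cross u w := by
  funext k; fin_cases k <;> simp [cross, Pi.smul_apply, smul_eq_mul] <;> ring

lemma pd_shift {E : V3 → C3} {D : Set V3} (hD : IsOpen D) {z v : V3} (hz : z ∈ D)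
    {c : ℂ} (hqp : ∀ x ∈ D, E (x + v) = c • E x)
    (hd1 : DifferentiableAt ℝ E z) (hd2 : DifferentiableAt ℝ E (z + v)) (i j : Fin 3) :
    pd j (fun y => E y i) (z + v) = c * pd j (fun y => E y i) z := by
  have hA1 : DifferentiableAt ℝ (fun y => E y i) z := diffAt_comp hd1 i
  have hA2 : DifferentiableAt ℝ (fun y => E y i) (z + v) := diffAt_comp hd2 i
  have htr : HasFDerivAt (fun y : V3 => y + v) (ContinuousLinearMap.id ℝ V3) z :=
    (hasFDerivAt_id z).add_const v
  have hcomp : fderiv ℝ (fun y => E (y + v) i) z = fderiv ℝ (fun y => E y i) (z + v) := by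
    have h := (hA2.hasFDerivAt.comp z htr).fderiv
    rw [show (fun y => E (y + v) i) = (fun y => E y i) ∘ (fun y : V3 => y + v) from rfl, h]
    simp
  have hEv : (fun y => E (y + v) i) =ᶠ[nhds z] fun y => c * E y i := by
    filter_upwards [hD.mem_nhds hz] with x hx
    rw [hqp x hx]; simp
  have h2 : fderiv ℝ (fun y => E (y + v) i) z = fderiv ℝ (fun y => c * E y i) z :=
    hEv.fderiv_eq
  unfold pd
  rw [← hcomp, h2, (hA1.hasFDerivAt.const_mul c).fderiv]
  simp

lemma curl3_shift {E : V3 → C3} {D : Set V3} (hD : IsOpen D) {z v : V3} (hz : z ∈ D)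
    {c : ℂ} (hqp : ∀ x ∈ D, E (x + v) = c • E x)
    (hd1 : DifferentiableAt ℝ E z) (hd2 : DifferentiableAt ℝ E (z + v)) :
    curl3 E (z + v) = c • curl3 E z := by
  have h := pd_shift hD hz hqp hd1 hd2
  funext k; fin_cases k <;>
    simp [curl3, h, Pi.smul_apply, smul_eq_mul] <;> ring

lemma Ufield_shift {E W : V3 → C3} {D U : Set V3} (hD : IsOpen D) (hDU : D ⊆ U)
    (hU : IsOpen U) (hE : ContDiffOn ℝ 2 E U) (hW : ContDiffOn ℝ 2 W U)
    {z v : V3} (hz : z ∈ D) (hzv : z + v ∈ D)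
    {c c' : ℂ} (hcc : c * c' = 1)
    (hqpE : ∀ x ∈ D, E (x + v) = c • E x) (hqpW : ∀ x ∈ D, W (x + v) = c' • W x) :
    Ufield E W (z + v) = Ufield E W z := by
  have hdiff : ∀ (F : V3 → C3), ContDiffOn ℝ 2 F U → ∀ x ∈ D, DifferentiableAt ℝ F x := by
    intro F hF x hx
    exact ((hF.differentiableOn (by norm_num)).differentiableAt
      (hU.mem_nhds (hDU hx)))
  have hcE := curl3_shift hD hz hqpE (hdiff E hE z hz) (hdiff E hE _ hzv)
  have hcW := curl3_shift hD hz hqpW (hdiff W hW z hz) (hdiff W hW _ hzv)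
  unfold Ufield
  rw [hcE, hcW, hqpE z hz, hqpW z hz, cross_smul_smul, cross_smul_smul, hcc,
    show c' * c = 1 from by rw [mul_comm]; exact hcc, one_smul, one_smul]

end S13
namespace S13

def openLayer (f g : ℝ × ℝ → ℝ) : Set V3 :=
  {x : V3 | f (x 0, x 1) < x 2 ∧ x 2 < g (x 0, x 1)}

lemma isOpen_openLayer {f g : ℝ × ℝ → ℝ} (hf : Continuous f) (hg : Continuous g) :
    IsOpen (openLayer f g) := by
  have hπ : Continuous (fun x : V3 => ((x 0 : ℝ), (x 1 : ℝ))) :=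
    (continuous_apply 0).prodMk (continuous_apply 1)
  exact (isOpen_lt (hf.comp hπ) (continuous_apply 2)).inter
    (isOpen_lt (continuous_apply 2) (hg.comp hπ))

lemma openLayer_subset {f g : ℝ × ℝ → ℝ} : openLayer f g ⊆ layer f g :=
  fun x hx => ⟨le_of_lt hx.1, le_of_lt hx.2⟩

lemma smap_pt (f g : ℝ × ℝ → ℝ) (a b t : ℝ) :
    Smap f g ![a, b, t] = ![a, b, f (a, b) + t * (g (a, b) - f (a, b))] := by
  funext k; fin_cases k <;> simp [Smap]

lemma smap_mem_layer {f g : ℝ × ℝ → ℝ} (hfg : ∀ x', f x' < g x') (a b t : ℝ)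
    (ht0 : 0 ≤ t) (ht1 : t ≤ 1) : Smap f g ![a, b, t] ∈ layer f g := by
  rw [smap_pt]
  constructor <;> simp [layer] <;> nlinarith [hfg (a, b)]

lemma smap_mem_openLayer {f g : ℝ × ℝ → ℝ} (hfg : ∀ x', f x' < g x') (a b t : ℝ)
    (ht0 : 0 < t) (ht1 : t < 1) : Smap f g ![a, b, t] ∈ openLayer f g := by
  rw [smap_pt]
  constructor <;> simp [openLayer] <;> nlinarith [hfg (a, b)]

-- slice derivative lemmas
lemma curve_eq (a b t : ℝ) (j : Fin 3) :
    (fun s : ℝ => (![a, b, t] : V3) + (s - ![a, b, t] j) • stdR j) =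
      fun s : ℝ => Matrix.vecCons (if j = 0 then s else a)
        ![if j = 1 then s else b, if j = 2 then s else t] := by
  funext s k
  fin_cases j <;> fin_cases k <;> simp [stdR] <;> ring

lemma hasDerivAt_slice {F : V3 → ℂ} {y : V3} (hF : DifferentiableAt ℝ F y) (j : Fin 3) :
    HasDerivAt (fun s : ℝ => F (y + (s - y j) • stdR j)) (pd j F y) (y j) := by
  have hc : HasDerivAt (fun s : ℝ => y + (s - y j) • stdR j) (stdR j) (y j) := by
    have h1 : HasDerivAt (fun s : ℝ => s - y j) 1 (y j) :=
      (hasDerivAt_id (y j)).sub_const (y j)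
    have h2 := (h1.smul_const (stdR j)).const_add y
    simpa using h2
  have hF' : HasFDerivAt F (fderiv ℝ F y) (y + ((y j : ℝ) - y j) • stdR j) := by
    simpa using hF.hasFDerivAt
  have h := hF'.comp_hasDerivAt (y j) hc
  exact h

lemma hasDerivAt_axis2 {F : V3 → ℂ} {a b t : ℝ} (hF : DifferentiableAt ℝ F ![a, b, t]) :
    HasDerivAt (fun s : ℝ => F ![a, b, s]) (pd 2 F ![a, b, t]) t := by
  have h := hasDerivAt_slice hF 2
  have he : (fun s : ℝ => F ((![a,b,t] : V3) + (s - (![a,b,t] : V3) 2) • stdR 2)) =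
      fun s : ℝ => F ![a, b, s] := by
    funext s; congr 1; funext k; fin_cases k <;> simp [stdR]
  rw [he] at h
  simpa using h

lemma hasDerivAt_axis0 {F : V3 → ℂ} {a b t : ℝ} (hF : DifferentiableAt ℝ F ![a, b, t]) :
    HasDerivAt (fun s : ℝ => F ![s, b, t]) (pd 0 F ![a, b, t]) a := by
  have h := hasDerivAt_slice hF 0
  have he : (fun s : ℝ => F ((![a,b,t] : V3) + (s - (![a,b,t] : V3) 0) • stdR 0)) =
      fun s : ℝ => F ![s, b, t] := by
    funext s; congr 1; funext k; fin_cases k <;> simp [stdR]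
  rw [he] at h
  simpa using h

lemma hasDerivAt_axis1 {F : V3 → ℂ} {a b t : ℝ} (hF : DifferentiableAt ℝ F ![a, b, t]) :
    HasDerivAt (fun s : ℝ => F ![a, s, t]) (pd 1 F ![a, b, t]) b := by
  have h := hasDerivAt_slice hF 1
  have he : (fun s : ℝ => F ((![a,b,t] : V3) + (s - (![a,b,t] : V3) 1) • stdR 1)) =
      fun s : ℝ => F ![a, s, t] := by
    funext s; congr 1; funext k; fin_cases k <;> simp [stdR]
  rw [he] at h
  simpa using h

open MeasureTheory in
lemma setIntegral_prod_symm' {α β : Type*} [MeasurableSpace α] [MeasurableSpace β]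
    {μ : Measure α} {ν : Measure β} [SigmaFinite ν] [SigmaFinite μ]
    {G : Type*} [NormedAddCommGroup G] [NormedSpace ℝ G]
    (f : α × β → G) {s : Set α} {t : Set β}
    (hf : IntegrableOn f (s ×ˢ t) (μ.prod ν)) :
    ∫ z in s ×ˢ t, f z ∂μ.prod ν = ∫ y in t, ∫ x in s, f (x, y) ∂μ ∂ν := by
  simp only [← Measure.prod_restrict s t, IntegrableOn] at hf ⊢
  exact integral_prod_symm f hf

end S13
namespace S13

lemma greenGraph_eq (φ : ℝ × ℝ → ℝ) (E W : V3 → C3) (x' : ℝ × ℝ) :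
    greenGraph φ E W x' =
      Ufield E W (graphPt φ x') 2 -
        ((pdR 0 φ x' : ℝ) : ℂ) * Ufield E W (graphPt φ x') 0 -
        ((pdR 1 φ x' : ℝ) : ℂ) * Ufield E W (graphPt φ x') 1 := by
  have h1 : (0:ℝ) < 1 + (pdR 0 φ x') ^ 2 + (pdR 1 φ x') ^ 2 := by positivity
  have hA : (0:ℝ) < areaEl φ x' := Real.sqrt_pos.mpr h1
  have hAC : ((areaEl φ x' : ℝ) : ℂ) ≠ 0 := by exact_mod_cast hA.ne'
  simp only [greenGraph, Ufield, cross, cdot, nvec, toC3, Pi.smul_apply, smul_eq_mul,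
    Matrix.cons_val_zero, Matrix.cons_val_one, Matrix.head_cons, Pi.sub_apply,
    Matrix.cons_val_two, Matrix.tail_cons]
  push_cast
  field_simp
  ring

lemma w3f_top {f g : ℝ × ℝ → ℝ} (E W : V3 → C3) (x' : ℝ × ℝ) :
    W3f f g E W ![x'.1, x'.2, 1] = greenGraph g E W x' := by
  have hS : Smap f g ![x'.1, x'.2, 1] = graphPt g x' := by
    funext k; fin_cases k <;> simp [Smap, graphPt] <;> ring
  have he0 : eld f g ![x'.1, x'.2, 1] 0 = pdR 0 g x' := by simp [eld]
  have he1 : eld f g ![x'.1, x'.2, 1] 1 = pdR 1 g x' := by simp [eld]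
  rw [greenGraph_eq g E W x', W3f, hS, he0, he1]

lemma w3f_bot {f g : ℝ × ℝ → ℝ} (E W : V3 → C3) (x' : ℝ × ℝ) :
    W3f f g E W ![x'.1, x'.2, 0] = greenGraph f E W x' := by
  have hS : Smap f g ![x'.1, x'.2, 0] = graphPt f x' := by
    funext k; fin_cases k <;> simp [Smap, graphPt]
  have he0 : eld f g ![x'.1, x'.2, 0] 0 = pdR 0 f x' := by simp [eld]
  have he1 : eld f g ![x'.1, x'.2, 0] 1 = pdR 1 f x' := by simp [eld]
  rw [greenGraph_eq f E W x', W3f, hS, he0, he1]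

end S13
namespace S13

open ContinuousLinearMap

lemma contDiff_pi2' : ContDiff ℝ 1 (fun y : V3 => ((y 0 : ℝ), (y 1 : ℝ))) :=
  pi2.contDiff

lemma contDiff_Smap {f g : ℝ × ℝ → ℝ} (hf : ContDiff ℝ 2 f) (hg : ContDiff ℝ 2 g) :
    ContDiff ℝ 1 (Smap f g) := by
  apply contDiff_pi.mpr
  intro i
  fin_cases i
  · have he : (fun y : V3 => Smap f g y 0) = fun y : V3 => y 0 := by
      funext y; simp [Smap]
    show ContDiff ℝ 1 (fun y : V3 => Smap f g y 0)
    rw [he]; exact (proj (0 : Fin 3) : V3 →L[ℝ] ℝ).contDiff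
  · have he : (fun y : V3 => Smap f g y 1) = fun y : V3 => y 1 := by
      funext y; simp [Smap]
    show ContDiff ℝ 1 (fun y : V3 => Smap f g y 1)
    rw [he]; exact (proj (1 : Fin 3) : V3 →L[ℝ] ℝ).contDiff
  · have h : ContDiff ℝ 1 (fun y : V3 =>
        f (y 0, y 1) + y 2 * (g (y 0, y 1) - f (y 0, y 1))) :=
      (((hf.of_le (by norm_num)).comp contDiff_pi2')).add
        (((proj (2 : Fin 3) : V3 →L[ℝ] ℝ).contDiff).mul
          (((hg.of_le (by norm_num)).comp contDiff_pi2').sub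
            ((hf.of_le (by norm_num)).comp contDiff_pi2')))
    have he : (fun y : V3 => Smap f g y 2) =
        fun y : V3 => f (y 0, y 1) + y 2 * (g (y 0, y 1) - f (y 0, y 1)) := by
      funext y; simp [Smap]
    show ContDiff ℝ 1 (fun y : V3 => Smap f g y 2)
    rw [he]; exact h

lemma contDiff_hgapC {f g : ℝ × ℝ → ℝ} (hf : ContDiff ℝ 2 f) (hg : ContDiff ℝ 2 g) :
    ContDiff ℝ 1 (fun y : V3 => ((g (y 0, y 1) - f (y 0, y 1) : ℝ) : ℂ)) :=
  Complex.ofRealCLM.contDiff.comp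
    (((hg.of_le (by norm_num)).comp contDiff_pi2').sub
      ((hf.of_le (by norm_num)).comp contDiff_pi2'))

lemma contDiff_eldC {f g : ℝ × ℝ → ℝ} (hf : ContDiff ℝ 2 f) (hg : ContDiff ℝ 2 g)
    (i : Fin 2) :
    ContDiff ℝ 1 (fun y : V3 => ((eld f g y ⟨i, by omega⟩ : ℝ) : ℂ)) := by
  have h : ContDiff ℝ 1 (fun y : V3 =>
      pdR i f (y 0, y 1) + y 2 * (pdR i g (y 0, y 1) - pdR i f (y 0, y 1))) :=
    ((contDiff_pdR hf i).comp contDiff_pi2').add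
      (((proj (2 : Fin 3) : V3 →L[ℝ] ℝ).contDiff).mul
        (((contDiff_pdR hg i).comp contDiff_pi2').sub
          ((contDiff_pdR hf i).comp contDiff_pi2')))
  have he : (fun y : V3 => (eld f g y ⟨i, by omega⟩ : ℝ)) = fun y : V3 =>
      pdR i f (y 0, y 1) + y 2 * (pdR i g (y 0, y 1) - pdR i f (y 0, y 1)) := by
    funext y; fin_cases i <;> simp [eld]
  show ContDiff ℝ 1 (fun y : V3 => ((eld f g y ⟨i, by omega⟩ : ℝ) : ℂ))
  have : (fun y : V3 => ((eld f g y ⟨i, by omega⟩ : ℝ) : ℂ)) =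
      Complex.ofRealCLM ∘ (fun y : V3 => (eld f g y ⟨i, by omega⟩ : ℝ)) := rfl
  rw [this, he]
  exact Complex.ofRealCLM.contDiff.comp h

lemma contDiffOn_Vfun {f g : ℝ × ℝ → ℝ} {E W : V3 → C3} {U : Set V3}
    (hU : IsOpen U) (hf : ContDiff ℝ 2 f) (hg : ContDiff ℝ 2 g)
    (hE : ContDiffOn ℝ 2 E U) (hW : ContDiffOn ℝ 2 W U) (k : Fin 3) :
    ContDiffOn ℝ 1 (Vfun f g E W k) (Smap f g ⁻¹' U) :=
  (((contDiffOn_UfieldComp hU hE hW k).comp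
      (contDiff_Smap hf hg).contDiffOn (Set.mapsTo_preimage _ _)).mul
    (contDiff_hgapC hf hg).contDiffOn)

lemma contDiffOn_W3f {f g : ℝ × ℝ → ℝ} {E W : V3 → C3} {U : Set V3}
    (hU : IsOpen U) (hf : ContDiff ℝ 2 f) (hg : ContDiff ℝ 2 g)
    (hE : ContDiffOn ℝ 2 E U) (hW : ContDiffOn ℝ 2 W U) :
    ContDiffOn ℝ 1 (W3f f g E W) (Smap f g ⁻¹' U) := by
  have hc : ∀ k, ContDiffOn ℝ 1 (fun x => Ufield E W (Smap f g x) k) (Smap f g ⁻¹' U) :=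
    fun k => (contDiffOn_UfieldComp hU hE hW k).comp
      (contDiff_Smap hf hg).contDiffOn (Set.mapsTo_preimage _ _)
  have h0 := (contDiff_eldC hf hg 0).contDiffOn (s := Smap f g ⁻¹' U)
  have h1 := (contDiff_eldC hf hg 1).contDiffOn (s := Smap f g ⁻¹' U)
  exact ((hc 2).sub (h0.mul (hc 0))).sub (h1.mul (hc 1))

lemma contOn_pd {F : V3 → ℂ} {O : Set V3} (hO : IsOpen O) (hF : ContDiffOn ℝ 1 F O)
    (j : Fin 3) : ContinuousOn (fun y => pd j F y) O :=
  (ContinuousLinearMap.apply ℝ ℂ (stdR j)).continuous.comp_continuousOn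
    (hF.continuousOn_fderiv_of_isOpen hO le_rfl)

lemma diffAt_of_contDiffOn {F : V3 → ℂ} {O : Set V3} (hO : IsOpen O)
    (hF : ContDiffOn ℝ 1 F O) {y : V3} (hy : y ∈ O) : DifferentiableAt ℝ F y :=
  (hF.differentiableOn one_ne_zero).differentiableAt (hO.mem_nhds hy)

open Real in
lemma smap_shift {f g : ℝ × ℝ → ℝ} (hfper : Per2 f) (hgper : Per2 g) (y : V3)
    (j : Fin 2) :
    Smap f g (y + (2 * π) • stdR ⟨j, by omega⟩) =
      Smap f g y + (2 * π) • stdR ⟨j, by omega⟩ := by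
  have harg : ((y + (2 * π) • stdR ⟨j, by omega⟩) 0, (y + (2 * π) • stdR ⟨j, by omega⟩) 1)
      = (if j = 0 then (y 0 + 2 * π, y 1) else (y 0, y 1 + 2 * π)) := by
    fin_cases j <;> simp [stdR]
  have hfs : f ((y + (2 * π) • stdR ⟨j, by omega⟩) 0,
      (y + (2 * π) • stdR ⟨j, by omega⟩) 1) = f (y 0, y 1) := by
    rw [harg]; fin_cases j <;> simp [(hfper (y 0, y 1)).1, (hfper (y 0, y 1)).2]
  have hgs : g ((y + (2 * π) • stdR ⟨j, by omega⟩) 0,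
      (y + (2 * π) • stdR ⟨j, by omega⟩) 1) = g (y 0, y 1) := by
    rw [harg]; fin_cases j <;> simp [(hgper (y 0, y 1)).1, (hgper (y 0, y 1)).2]
  funext k
  by_cases hk : k = 2
  · subst hk
    show f _ + _ * (g _ - f _) = Smap f g y 2 + (2 * π) * stdR ⟨j, by omega⟩ 2
    rw [hfs, hgs]
    have h2 : (y + (2 * π) • stdR ⟨j, by omega⟩) 2 = y 2 := by
      fin_cases j <;> simp [stdR]
    rw [h2]
    have : stdR (⟨j, by omega⟩ : Fin 3) 2 = 0 := by fin_cases j <;> simp [stdR]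
    rw [this]
    simp [Smap]
  · simp [Smap, hk]

open Real in
lemma openLayer_shift {f g : ℝ × ℝ → ℝ} (hfper : Per2 f) (hgper : Per2 g)
    {z : V3} (hz : z ∈ openLayer f g) (j : Fin 2) :
    z + (2 * π) • stdR ⟨j, by omega⟩ ∈ openLayer f g := by
  have harg : ((z + (2 * π) • stdR ⟨j, by omega⟩) 0, (z + (2 * π) • stdR ⟨j, by omega⟩) 1)
      = (if j = 0 then (z 0 + 2 * π, z 1) else (z 0, z 1 + 2 * π)) := by
    fin_cases j <;> simp [stdR]
  have h2 : (z + (2 * π) • stdR ⟨j, by omega⟩) 2 = z 2 := by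
    fin_cases j <;> simp [stdR]
  constructor
  · show f _ < _
    rw [harg, h2]
    fin_cases j <;> simp [(hfper (z 0, z 1)).1, (hfper (z 0, z 1)).2] <;> exact hz.1
  · show _ < g _
    rw [harg, h2]
    fin_cases j <;> simp [(hgper (z 0, z 1)).1, (hgper (z 0, z 1)).2] <;> exact hz.2

end S13
namespace S13

open Real in
lemma hgap_shift {f g : ℝ × ℝ → ℝ} (hfper : Per2 f) (hgper : Per2 g) (y : V3) (j : Fin 2) :
    g ((y + (2 * π) • stdR ⟨j, by omega⟩) 0, (y + (2 * π) • stdR ⟨j, by omega⟩) 1) -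
      f ((y + (2 * π) • stdR ⟨j, by omega⟩) 0, (y + (2 * π) • stdR ⟨j, by omega⟩) 1) =
      g (y 0, y 1) - f (y 0, y 1) := by
  have harg : ((y + (2 * π) • stdR ⟨j, by omega⟩) 0, (y + (2 * π) • stdR ⟨j, by omega⟩) 1)
      = (if j = 0 then (y 0 + 2 * π, y 1) else (y 0, y 1 + 2 * π)) := by
    fin_cases j <;> simp [stdR]
  rw [harg]
  fin_cases j <;>
    simp [(hfper (y 0, y 1)).1, (hfper (y 0, y 1)).2,
      (hgper (y 0, y 1)).1, (hgper (y 0, y 1)).2]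

end S13

open S13 in
/-- the second vector Green identity between two biperiodic graphs: for
an α-quasi-periodic `E` and a (-α)-quasi-periodic `W`, both solving
`curl curl - κ = 0` in the layer, the Green boundary integrals over the top and
bottom profiles of one period cell are equal. -/
theorem statement13 (α : ℝ × ℝ) (f g : ℝ × ℝ → ℝ)
    (hf : ContDiff ℝ 2 f) (hg : ContDiff ℝ 2 g) (hfper : Per2 f) (hgper : Per2 g)
    (hfg : ∀ x' : ℝ × ℝ, f x' < g x')
    (κ : V3 → ℂ) (hκ : ContinuousOn κ (layer f g))
    (hκper : ∀ x ∈ layer f g,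
      κ (x + (2 * π) • stdR 0) = κ x ∧ κ (x + (2 * π) • stdR 1) = κ x)
    (E W : V3 → C3)
    (hEreg : ∃ U : Set V3, IsOpen U ∧ layer f g ⊆ U ∧ ContDiffOn ℝ 2 E U)
    (hWreg : ∃ U : Set V3, IsOpen U ∧ layer f g ⊆ U ∧ ContDiffOn ℝ 2 W U)
    (hEqp : QPOn α (layer f g) E) (hWqp : QPOn (-α) (layer f g) W)
    (hEeq : ∀ x : V3, f (x 0, x 1) < x 2 → x 2 < g (x 0, x 1) →
      curl3 (curl3 E) x - κ x • E x = 0)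
    (hWeq : ∀ x : V3, f (x 0, x 1) < x 2 → x 2 < g (x 0, x 1) →
      curl3 (curl3 W) x - κ x • W x = 0) :
    (∫ x' in cellSq, greenGraph g E W x') = ∫ x' in cellSq, greenGraph f E W x' := by
  classical
  obtain ⟨U₁, hU₁o, hU₁l, hE2⟩ := hEreg
  obtain ⟨U₂, hU₂o, hU₂l, hW2⟩ := hWreg
  set U : Set V3 := U₁ ∩ U₂ with hUdef
  have hU : IsOpen U := hU₁o.inter hU₂o
  have hUl : layer f g ⊆ U := Set.subset_inter hU₁l hU₂l
  have hE : ContDiffOn ℝ 2 E U := hE2.mono Set.inter_subset_left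
  have hW : ContDiffOn ℝ 2 W U := hW2.mono Set.inter_subset_right
  have hfc : Continuous f := hf.continuous
  have hgc : Continuous g := hg.continuous
  set D : Set V3 := openLayer f g with hDdef
  have hD : IsOpen D := isOpen_openLayer hfc hgc
  have hDU : D ⊆ U := fun x hx => hUl (openLayer_subset hx)
  set O : Set V3 := Smap f g ⁻¹' U with hOdef
  have hOopen : IsOpen O := hU.preimage (contDiff_Smap hf hg).continuous
  have h2π : (0 : ℝ) < 2 * π := by positivity
  -- membership facts
  have hmemO : ∀ (a b t : ℝ), 0 ≤ t → t ≤ 1 → (![a, b, t] : V3) ∈ O :=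
    fun a b t h0 h1 => hUl (smap_mem_layer hfg a b t h0 h1)
  -- regularity of the composed fields
  have hV0r : ContDiffOn ℝ 1 (Vfun f g E W 0) O := contDiffOn_Vfun hU hf hg hE hW 0
  have hV1r : ContDiffOn ℝ 1 (Vfun f g E W 1) O := contDiffOn_Vfun hU hf hg hE hW 1
  have hW3r : ContDiffOn ℝ 1 (W3f f g E W) O := contDiffOn_W3f hU hf hg hE hW
  have hpdV0 : ContinuousOn (fun y => pd 0 (Vfun f g E W 0) y) O := contOn_pd hOopen hV0r 0
  have hpdV1 : ContinuousOn (fun y => pd 1 (Vfun f g E W 1) y) O := contOn_pd hOopen hV1r 1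
  have hpdW3 : ContinuousOn (fun y => pd 2 (W3f f g E W) y) O := contOn_pd hOopen hW3r 2
  -- quasi-periodicity of the Green field
  have hUper : ∀ (j : Fin 2), ∀ z ∈ D,
      Ufield E W (z + (2 * π) • stdR ⟨j, by omega⟩) = Ufield E W z := by
    intro j z hz
    have hzv := openLayer_shift hfper hgper hz j
    fin_cases j
    · have hcc : Complex.exp (2 * π * α.1 * Complex.I) *
          Complex.exp (2 * π * (-α).1 * Complex.I) = 1 := by
        rw [← Complex.exp_add, show (2 * π * α.1 * Complex.I : ℂ) +
          2 * π * (-α).1 * Complex.I = 0 by rw [Prod.fst_neg]; push_cast; ring, Complex.exp_zero]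
      exact Ufield_shift hD hDU hU hE hW hz hzv hcc
        (fun x hx => (hEqp x (openLayer_subset hx)).1)
        (fun x hx => (hWqp x (openLayer_subset hx)).1)
    · have hcc : Complex.exp (2 * π * α.2 * Complex.I) *
          Complex.exp (2 * π * (-α).2 * Complex.I) = 1 := by
        rw [← Complex.exp_add, show (2 * π * α.2 * Complex.I : ℂ) +
          2 * π * (-α).2 * Complex.I = 0 by rw [Prod.snd_neg]; push_cast; ring, Complex.exp_zero]
      exact Ufield_shift hD hDU hU hE hW hz hzv hcc
        (fun x hx => (hEqp x (openLayer_subset hx)).2)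
        (fun x hx => (hWqp x (openLayer_subset hx)).2)
  -- periodicity of Vfun
  have hVper : ∀ (k : Fin 3) (j : Fin 2) (y : V3), Smap f g y ∈ D →
      Vfun f g E W k (y + (2 * π) • stdR ⟨j, by omega⟩) = Vfun f g E W k y := by
    intro k j y hy
    show Ufield E W (Smap f g (y + (2 * π) • stdR ⟨j, by omega⟩)) k * _ = _
    rw [smap_shift hfper hgper y j, hUper j _ hy, hgap_shift hfper hgper y j]
    rfl
  -- the slice functions; G2 pointwise identity on Q
  set G0 : (ℝ × ℝ) × ℝ → ℂ := fun p => pd 0 (Vfun f g E W 0) ![p.1.1, p.1.2, p.2] with hG0def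
  set G1 : (ℝ × ℝ) × ℝ → ℂ := fun p => pd 1 (Vfun f g E W 1) ![p.1.1, p.1.2, p.2] with hG1def
  set G2 : (ℝ × ℝ) × ℝ → ℂ := fun p => pd 2 (W3f f g E W) ![p.1.1, p.1.2, p.2] with hG2def
  set Q : Set ((ℝ × ℝ) × ℝ) := cellSq ×ˢ Set.Ioo (0 : ℝ) 1 with hQdef
  set K : Set ((ℝ × ℝ) × ℝ) :=
    (Set.Icc (0 : ℝ) (2 * π) ×ˢ Set.Icc (0 : ℝ) (2 * π)) ×ˢ Set.Icc (0 : ℝ) 1 with hKdef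
  have hQK : Q ⊆ K := by
    apply Set.prod_mono _ Set.Ioo_subset_Icc_self
    exact Set.prod_mono Set.Ioo_subset_Icc_self Set.Ioo_subset_Icc_self
  have hKcomp : IsCompact K := (isCompact_Icc.prod isCompact_Icc).prod isCompact_Icc
  have hemb : Continuous (fun p : (ℝ × ℝ) × ℝ => (![p.1.1, p.1.2, p.2] : V3)) := by
    apply continuous_pi
    intro i
    fin_cases i
    · simpa using (continuous_fst.fst : Continuous fun a : (ℝ × ℝ) × ℝ => a.1.1)
    · simpa using (continuous_fst.snd : Continuous fun a : (ℝ × ℝ) × ℝ => a.1.2)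
    · simpa using continuous_snd
  have hKmap : Set.MapsTo (fun p : (ℝ × ℝ) × ℝ => (![p.1.1, p.1.2, p.2] : V3)) K O :=
    fun p hp => hmemO p.1.1 p.1.2 p.2 hp.2.1 hp.2.2
  have hG0cont : ContinuousOn G0 K := hpdV0.comp hemb.continuousOn hKmap
  have hG1cont : ContinuousOn G1 K := hpdV1.comp hemb.continuousOn hKmap
  have hG2cont : ContinuousOn G2 K := hpdW3.comp hemb.continuousOn hKmap
  have hG0int : MeasureTheory.IntegrableOn G0 Q :=
    (hG0cont.integrableOn_compact hKcomp).mono_set hQK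
  have hG1int : MeasureTheory.IntegrableOn G1 Q :=
    (hG1cont.integrableOn_compact hKcomp).mono_set hQK
  have hG2int : MeasureTheory.IntegrableOn G2 Q :=
    (hG2cont.integrableOn_compact hKcomp).mono_set hQK
  have hQmeas : MeasurableSet Q :=
    ((measurableSet_Ioo.prod measurableSet_Ioo).prod measurableSet_Ioo)
  have hCellmeas : MeasurableSet cellSq := measurableSet_Ioo.prod measurableSet_Ioo
  -- key pointwise identity
  have hkey : ∀ p ∈ Q, G2 p = -G0 p - G1 p := by
    intro p hp
    set y : V3 := ![p.1.1, p.1.2, p.2] with hy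
    have ht0 : (0 : ℝ) < p.2 := hp.2.1
    have ht1 : p.2 < 1 := hp.2.2
    have hzD : Smap f g y ∈ D := smap_mem_openLayer hfg _ _ _ ht0 ht1
    have hzU : Smap f g y ∈ U := hDU hzD
    have h := key_pointwise hU hf hg hE hW hzU
    have hdiv : div3 (Ufield E W) (Smap f g y) = 0 := by
      rw [div3_Ufield hU hE hW hzU,
        sub_eq_zero.mp (hEeq _ hzD.1 hzD.2), sub_eq_zero.mp (hWeq _ hzD.1 hzD.2)]
      simp [cdot, Pi.smul_apply, smul_eq_mul]
      ring
    rw [hdiv, mul_zero] at h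
    simp only [hG0def, hG1def, hG2def]
    linear_combination h
  -- integrability of the boundary integrands
  have hcellIcc : cellSq ⊆ Set.Icc (0 : ℝ) (2 * π) ×ˢ Set.Icc (0 : ℝ) (2 * π) :=
    Set.prod_mono Set.Ioo_subset_Icc_self Set.Ioo_subset_Icc_self
  have hbdcont : ∀ c : ℝ, 0 ≤ c → c ≤ 1 → ContinuousOn
      (fun x' : ℝ × ℝ => W3f f g E W ![x'.1, x'.2, c])
      (Set.Icc (0 : ℝ) (2 * π) ×ˢ Set.Icc (0 : ℝ) (2 * π)) := by
    intro c hc0 hc1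
    have hembc : Continuous (fun x' : ℝ × ℝ => (![x'.1, x'.2, c] : V3)) := by
      apply continuous_pi
      intro i
      fin_cases i
      · simpa using continuous_fst
      · simpa using continuous_snd
      · simpa using (continuous_const : Continuous fun _ : ℝ × ℝ => c)
    exact (hW3r.continuousOn).comp hembc.continuousOn
      (fun x' _ => hmemO x'.1 x'.2 c hc0 hc1)
  have hIA : MeasureTheory.IntegrableOn (greenGraph g E W) cellSq := by
    have h1 : ContinuousOn (fun x' : ℝ × ℝ => greenGraph g E W x')
        (Set.Icc (0 : ℝ) (2 * π) ×ˢ Set.Icc (0 : ℝ) (2 * π)) := by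
      have := hbdcont 1 zero_le_one le_rfl
      exact this.congr (fun x' _ => (w3f_top E W x').symm)
    exact (h1.integrableOn_compact (isCompact_Icc.prod isCompact_Icc)).mono_set hcellIcc
  have hIB : MeasureTheory.IntegrableOn (greenGraph f E W) cellSq := by
    have h1 : ContinuousOn (fun x' : ℝ × ℝ => greenGraph f E W x')
        (Set.Icc (0 : ℝ) (2 * π) ×ˢ Set.Icc (0 : ℝ) (2 * π)) := by
      have := hbdcont 0 le_rfl zero_le_one
      exact this.congr (fun x' _ => (w3f_bot E W x').symm)
    exact (h1.integrableOn_compact (isCompact_Icc.prod isCompact_Icc)).mono_set hcellIcc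
  -- FTC in t
  have hslice : ∀ x' ∈ cellSq, greenGraph g E W x' - greenGraph f E W x' =
      ∫ t in Set.Ioo (0 : ℝ) 1, G2 (x', t) := by
    intro x' _
    rw [← w3f_top E W x', ← w3f_bot E W x']
    have hder : ∀ t ∈ Set.uIcc (0 : ℝ) 1,
        HasDerivAt (fun s => W3f f g E W ![x'.1, x'.2, s]) (G2 (x', t)) t := by
      intro t ht
      rw [Set.uIcc_of_le zero_le_one] at ht
      exact hasDerivAt_axis2 (diffAt_of_contDiffOn hOopen hW3r (hmemO _ _ _ ht.1 ht.2))
    have hcont : ContinuousOn (fun t => G2 (x', t)) (Set.uIcc (0 : ℝ) 1) := by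
      rw [Set.uIcc_of_le zero_le_one]
      have hembt : Continuous (fun t : ℝ => ((x', t) : (ℝ × ℝ) × ℝ)) :=
        continuous_const.prodMk continuous_id
      exact hG2cont.comp hembt.continuousOn
        (fun t ht => ⟨hcellIcc (by exact ‹x' ∈ cellSq›), ht⟩)
    have hFTC := intervalIntegral.integral_eq_sub_of_hasDerivAt hder
      hcont.intervalIntegrable
    rw [← hFTC, intervalIntegral.integral_of_le zero_le_one,
      MeasureTheory.integral_Ioc_eq_integral_Ioo]
  -- reduce to a single vanishing integral
  have hQint2 : MeasureTheory.IntegrableOn G2 Q ((volume : Measure (ℝ × ℝ)).prod volume) := by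
    have h := hG2int
    rwa [MeasureTheory.Measure.volume_eq_prod (ℝ × ℝ) ℝ] at h
  have e2 : ∫ p in Q, G2 p = ∫ x' in cellSq, ∫ t in Set.Ioo (0 : ℝ) 1, G2 (x', t) := by
    rw [MeasureTheory.Measure.volume_eq_prod (ℝ × ℝ) ℝ]
    exact MeasureTheory.setIntegral_prod G2 hQint2
  -- the two lateral vanishing results
  have hG0zero : ∫ p in Q, G0 p = 0 := by
    have hQint0 : MeasureTheory.IntegrableOn G0 Q ((volume : Measure (ℝ × ℝ)).prod volume) := by
      have h := hG0int
      rwa [MeasureTheory.Measure.volume_eq_prod (ℝ × ℝ) ℝ] at h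
    rw [MeasureTheory.Measure.volume_eq_prod (ℝ × ℝ) ℝ, S13.setIntegral_prod_symm' G0 hQint0]
    have hz : Set.EqOn (fun t : ℝ => ∫ x' in cellSq, G0 (x', t)) (fun _ => (0 : ℂ))
        (Set.Ioo (0 : ℝ) 1) := by
      intro t ht
      have hsl : ContinuousOn (fun x' : ℝ × ℝ => G0 (x', t))
          (Set.Icc (0 : ℝ) (2 * π) ×ˢ Set.Icc (0 : ℝ) (2 * π)) :=
        hG0cont.comp ((continuous_id.prodMk continuous_const).continuousOn)
          (fun x' hx' => ⟨hx', ht.1.le, ht.2.le⟩)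
      have hsli : MeasureTheory.IntegrableOn (fun x' : ℝ × ℝ => G0 (x', t))
          (Set.Ioo (0 : ℝ) (2 * π) ×ˢ Set.Ioo (0 : ℝ) (2 * π))
          ((volume : Measure ℝ).prod volume) := by
        have h : MeasureTheory.IntegrableOn (fun x' : ℝ × ℝ => G0 (x', t))
            (Set.Ioo (0 : ℝ) (2 * π) ×ˢ Set.Ioo (0 : ℝ) (2 * π)) volume :=
          (hsl.integrableOn_compact (isCompact_Icc.prod isCompact_Icc)).mono_set
            (Set.prod_mono Set.Ioo_subset_Icc_self Set.Ioo_subset_Icc_self)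
        rwa [MeasureTheory.Measure.volume_eq_prod ℝ ℝ] at h
      show (∫ x' in cellSq, G0 (x', t)) = 0
      rw [show cellSq = Set.Ioo (0 : ℝ) (2 * π) ×ˢ Set.Ioo (0 : ℝ) (2 * π) from rfl,
        MeasureTheory.Measure.volume_eq_prod ℝ ℝ, S13.setIntegral_prod_symm' _ hsli]
      have hzz : Set.EqOn (fun b : ℝ => ∫ a in Set.Ioo (0 : ℝ) (2 * π), G0 ((a, b), t))
          (fun _ => (0 : ℂ)) (Set.Ioo (0 : ℝ) (2 * π)) := by
        intro b hb
        have hder : ∀ s ∈ Set.uIcc (0 : ℝ) (2 * π),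
            HasDerivAt (fun a => Vfun f g E W 0 ![a, b, t]) (G0 ((s, b), t)) s :=
          fun s _ => hasDerivAt_axis0
            (diffAt_of_contDiffOn hOopen hV0r (hmemO _ _ _ ht.1.le ht.2.le))
        have hcont : ContinuousOn (fun s : ℝ => G0 ((s, b), t))
            (Set.uIcc (0 : ℝ) (2 * π)) := by
          rw [Set.uIcc_of_le h2π.le]
          have hembs : Continuous (fun s : ℝ => (((s, b), t) : (ℝ × ℝ) × ℝ)) :=
            (continuous_id.prodMk continuous_const).prodMk continuous_const
          exact hG0cont.comp hembs.continuousOn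
            (fun s hs => ⟨⟨hs, Set.Ioo_subset_Icc_self hb⟩, ht.1.le, ht.2.le⟩)
        have hFTC := intervalIntegral.integral_eq_sub_of_hasDerivAt hder
          hcont.intervalIntegrable
        rw [intervalIntegral.integral_of_le h2π.le,
          MeasureTheory.integral_Ioc_eq_integral_Ioo] at hFTC
        show (∫ a in Set.Ioo (0 : ℝ) (2 * π), G0 ((a, b), t)) = 0
        rw [hFTC]
        have hper : Vfun f g E W 0 ![2 * π, b, t] = Vfun f g E W 0 ![0, b, t] := by
          have hpt : (![2 * π, b, t] : V3) =
              ![0, b, t] + (2 * π) • stdR ⟨((0 : Fin 2) : ℕ), by omega⟩ := by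
            funext k; fin_cases k <;> simp [stdR]
          rw [hpt]
          exact hVper 0 0 ![0, b, t] (smap_mem_openLayer hfg 0 b t ht.1 ht.2)
        rw [hper, sub_self]
      rw [MeasureTheory.setIntegral_congr_fun measurableSet_Ioo hzz]
      simp
    rw [MeasureTheory.setIntegral_congr_fun measurableSet_Ioo hz]
    simp
  have hG1zero : ∫ p in Q, G1 p = 0 := by
    have hQint1 : MeasureTheory.IntegrableOn G1 Q ((volume : Measure (ℝ × ℝ)).prod volume) := by
      have h := hG1int
      rwa [MeasureTheory.Measure.volume_eq_prod (ℝ × ℝ) ℝ] at h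
    rw [MeasureTheory.Measure.volume_eq_prod (ℝ × ℝ) ℝ, S13.setIntegral_prod_symm' G1 hQint1]
    have hz : Set.EqOn (fun t : ℝ => ∫ x' in cellSq, G1 (x', t)) (fun _ => (0 : ℂ))
        (Set.Ioo (0 : ℝ) 1) := by
      intro t ht
      have hsl : ContinuousOn (fun x' : ℝ × ℝ => G1 (x', t))
          (Set.Icc (0 : ℝ) (2 * π) ×ˢ Set.Icc (0 : ℝ) (2 * π)) :=
        hG1cont.comp ((continuous_id.prodMk continuous_const).continuousOn)
          (fun x' hx' => ⟨hx', ht.1.le, ht.2.le⟩)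
      have hsli : MeasureTheory.IntegrableOn (fun x' : ℝ × ℝ => G1 (x', t))
          (Set.Ioo (0 : ℝ) (2 * π) ×ˢ Set.Ioo (0 : ℝ) (2 * π))
          ((volume : Measure ℝ).prod volume) := by
        have h : MeasureTheory.IntegrableOn (fun x' : ℝ × ℝ => G1 (x', t))
            (Set.Ioo (0 : ℝ) (2 * π) ×ˢ Set.Ioo (0 : ℝ) (2 * π)) volume :=
          (hsl.integrableOn_compact (isCompact_Icc.prod isCompact_Icc)).mono_set
            (Set.prod_mono Set.Ioo_subset_Icc_self Set.Ioo_subset_Icc_self)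
        rwa [MeasureTheory.Measure.volume_eq_prod ℝ ℝ] at h
      show (∫ x' in cellSq, G1 (x', t)) = 0
      rw [show cellSq = Set.Ioo (0 : ℝ) (2 * π) ×ˢ Set.Ioo (0 : ℝ) (2 * π) from rfl,
        MeasureTheory.Measure.volume_eq_prod ℝ ℝ, MeasureTheory.setIntegral_prod _ hsli]
      have hzz : Set.EqOn (fun a : ℝ => ∫ b in Set.Ioo (0 : ℝ) (2 * π), G1 ((a, b), t))
          (fun _ => (0 : ℂ)) (Set.Ioo (0 : ℝ) (2 * π)) := by
        intro a ha
        have hder : ∀ s ∈ Set.uIcc (0 : ℝ) (2 * π),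
            HasDerivAt (fun b => Vfun f g E W 1 ![a, b, t]) (G1 ((a, s), t)) s :=
          fun s _ => hasDerivAt_axis1
            (diffAt_of_contDiffOn hOopen hV1r (hmemO _ _ _ ht.1.le ht.2.le))
        have hcont : ContinuousOn (fun s : ℝ => G1 ((a, s), t))
            (Set.uIcc (0 : ℝ) (2 * π)) := by
          rw [Set.uIcc_of_le h2π.le]
          have hembs : Continuous (fun s : ℝ => (((a, s), t) : (ℝ × ℝ) × ℝ)) :=
            (continuous_const.prodMk continuous_id).prodMk continuous_const
          exact hG1cont.comp hembs.continuousOn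
            (fun s hs => ⟨⟨Set.Ioo_subset_Icc_self ha, hs⟩, ht.1.le, ht.2.le⟩)
        have hFTC := intervalIntegral.integral_eq_sub_of_hasDerivAt hder
          hcont.intervalIntegrable
        rw [intervalIntegral.integral_of_le h2π.le,
          MeasureTheory.integral_Ioc_eq_integral_Ioo] at hFTC
        show (∫ b in Set.Ioo (0 : ℝ) (2 * π), G1 ((a, b), t)) = 0
        rw [hFTC]
        have hper : Vfun f g E W 1 ![a, 2 * π, t] = Vfun f g E W 1 ![a, 0, t] := by
          have hpt : (![a, 2 * π, t] : V3) =
              ![a, 0, t] + (2 * π) • stdR ⟨((1 : Fin 2) : ℕ), by omega⟩ := by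
            funext k; fin_cases k <;> simp [stdR]
          rw [hpt]
          exact hVper 1 1 ![a, 0, t] (smap_mem_openLayer hfg a 0 t ht.1 ht.2)
        rw [hper, sub_self]
      rw [MeasureTheory.setIntegral_congr_fun measurableSet_Ioo hzz]
      simp
    rw [MeasureTheory.setIntegral_congr_fun measurableSet_Ioo hz]
    simp
  -- assemble
  have hkey' : Set.EqOn G2 (fun p => -G0 p - G1 p) Q := hkey
  have hsplit : ∫ p in Q, (-G0 p - G1 p) = -(∫ p in Q, G0 p) - ∫ p in Q, G1 p := by
    have h1 : MeasureTheory.IntegrableOn (fun p => -G0 p) Q := hG0int.neg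
    rw [MeasureTheory.integral_sub h1 hG1int, MeasureTheory.integral_neg]
  rw [← sub_eq_zero, ← MeasureTheory.integral_sub hIA hIB,
    MeasureTheory.setIntegral_congr_fun hCellmeas hslice, ← e2,
    MeasureTheory.setIntegral_congr_fun hQmeas hkey', hsplit, hG0zero, hG1zero]
  simp
end
end
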